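/- arXiv:1502.03740 — 5 statements merged into one kernel-verified Lean document; each statement's English description precedes it below -/
import Mathlib

section
/- Let I ⊆ ℝ be an interval, f : I → ℝ a function, and A ⊆ I a set such that f is differentiable at every point of A. If f(A) is a Lebesgue null set, then the set {t ∈ A | f'(t) ≠ 0} is a Lebesgue null set. -/
open MeasureTheory Set NNReal ENNReal

/-- Serrin–Varberg. If `f : I → ℝ` is differentiable at every point of
`A ⊆ I` and `f '' A` is a Lebesgue null set, then `{t ∈ A | f' t ≠ 0}` is a null set. -/
theorem stmt1 (I : Set ℝ) (hI : I.OrdConnected) (f : ℝ → ℝ) (A : Set ℝ) (hA : A ⊆ I)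
    (f' : ℝ → ℝ) (hf : ∀ t ∈ A, HasDerivWithinAt f (f' t) I t)
    (h0 : volume (f '' A) = 0) :
    volume {t ∈ A | f' t ≠ 0} = 0 := by
  set B := {t ∈ A | f' t ≠ 0} with hB
  set s : ℕ → ℤ → Set ℝ := fun n k =>
    {t ∈ B | (∀ x ∈ I, |x - t| ≤ 1 / (n + 1) → |x - t| ≤ (n + 1) * |f x - f t|) ∧
      t ∈ Icc ((k : ℝ) / (n + 1)) ((k + 1) / (n + 1))} with hs
  -- Cover B by the pieces s n k
  have hcover : B ⊆ ⋃ (n : ℕ) (k : ℤ), s n k := by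
    intro t ht
    obtain ⟨htA, htf⟩ := ht
    have hft : (0 : ℝ) < |f' t| := abs_pos.mpr htf
    have hc : (0 : ℝ) < |f' t| / 2 := by linarith
    have hlo := (hasDerivWithinAt_iff_isLittleO.mp (hf t htA)).def hc
    obtain ⟨δ, hδ, hsub⟩ := Metric.mem_nhdsWithin_iff.mp hlo
    obtain ⟨n, hn⟩ := exists_nat_gt (max (1 / δ) (2 / |f' t|))
    have hn1 : (0 : ℝ) < n + 1 := by positivity
    have hδn : 1 / ((n : ℝ) + 1) < δ := by
      rw [div_lt_iff₀ hn1]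
      have h1 : 1 / δ < n := lt_of_le_of_lt (le_max_left _ _) hn
      rw [div_lt_iff₀ hδ] at h1
      nlinarith
    have hcn : 1 / ((n : ℝ) + 1) ≤ |f' t| / 2 := by
      rw [div_le_iff₀ hn1]
      have h2 : 2 / |f' t| < n := lt_of_le_of_lt (le_max_right _ _) hn
      rw [div_lt_iff₀ hft] at h2
      nlinarith
    refine mem_iUnion.mpr ⟨n, mem_iUnion.mpr ⟨⌊t * (n + 1)⌋, ⟨⟨htA, htf⟩, ?_, ?_⟩⟩⟩
    · intro x hx hxt
      by_cases hxe : x = t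
      · simp [hxe]
      have hd : x ∈ Metric.ball t δ := by
        rw [Metric.mem_ball, Real.dist_eq]; exact lt_of_le_of_lt hxt hδn
      have hmem : x ∈ {x | ‖f x - f t - (x - t) • f' t‖ ≤ |f' t| / 2 * ‖x - t‖} :=
        hsub ⟨hd, hx⟩
      have h4 : |f x - f t - (x - t) * f' t| ≤ |f' t| / 2 * |x - t| := by
        simpa [Real.norm_eq_abs, smul_eq_mul] using hmem
      have habs : |f' t| / 2 * |x - t| ≤ |f x - f t| := by
        have h3 : |(x - t) * f' t| - |f x - f t| ≤ |f x - f t - (x - t) * f' t| := by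
          calc |(x - t) * f' t| - |f x - f t|
              ≤ |(x - t) * f' t - (f x - f t)| := abs_sub_abs_le_abs_sub _ _
            _ = |f x - f t - (x - t) * f' t| := by rw [abs_sub_comm]
        rw [abs_mul] at h3
        have := abs_nonneg (x - t)
        nlinarith
      have h7 : 1 ≤ ((n : ℝ) + 1) * (|f' t| / 2) := by
        rw [div_le_iff₀ hn1] at hcn; linarith
      have := abs_nonneg (x - t)
      nlinarith
    · constructor
      · rw [div_le_iff₀ hn1]
        exact_mod_cast Int.floor_le (t * (n + 1))
      · rw [le_div_iff₀ hn1]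
        have := Int.lt_floor_add_one (t * (n + 1))
        push_cast
        linarith
  -- Each piece is null
  have hnull : ∀ (n : ℕ) (k : ℤ), volume (s n k) = 0 := by
    intro n k
    have hn1 : (0 : ℝ) < n + 1 := by positivity
    set K : ℝ≥0 := (n : ℝ≥0) + 1 with hK
    have hKr : (K : ℝ) = (n : ℝ) + 1 := by rw [hK]; norm_cast
    have hdiff : ((k : ℝ) + 1) / (n + 1) - (k : ℝ) / (n + 1) = 1 / (n + 1) := by
      field_simp
      ring
    have hanti : ∀ x ∈ s n k, ∀ y ∈ s n k, |y - x| ≤ ((n : ℝ) + 1) * |f y - f x| := by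
      intro x hx y hy
      apply hx.2.1 y (hA hy.1.1)
      obtain ⟨hx1, hx2⟩ := hx.2.2
      obtain ⟨hy1, hy2⟩ := hy.2.2
      rw [abs_le]
      constructor <;> linarith
    have hinj : InjOn f (s n k) := by
      intro x hx y hy hxy
      have h := hanti x hx y hy
      rw [hxy, sub_self, abs_zero, mul_zero] at h
      have := abs_nonpos_iff.mp h
      linarith [sub_eq_zero.mp this]
    set g := Function.invFunOn f (s n k) with hg
    have hgf : ∀ x ∈ s n k, g (f x) = x := fun x hx => hinj.leftInvOn_invFunOn hx
    have hlip : LipschitzOnWith K g (f '' s n k) := by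
      rw [lipschitzOnWith_iff_dist_le_mul]
      rintro u ⟨x, hx, rfl⟩ v ⟨y, hy, rfl⟩
      rw [hgf x hx, hgf y hy, Real.dist_eq, Real.dist_eq, hKr]
      exact hanti y hy x hx
    have himg : g '' (f '' s n k) = s n k := by
      ext z
      constructor
      · rintro ⟨u, ⟨x, hx, rfl⟩, rfl⟩
        rw [hgf x hx]; exact hx
      · intro hz
        exact ⟨f z, mem_image_of_mem f hz, hgf z hz⟩
    have key : μH[1] (g '' (f '' s n k)) ≤ (K : ℝ≥0∞) ^ (1 : ℝ) * μH[1] (f '' s n k) :=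
      hlip.hausdorffMeasure_image_le zero_le_one
    rw [himg, ENNReal.rpow_one] at key
    have hHm : (μH[1] : Measure ℝ) = volume := hausdorffMeasure_real
    rw [hHm] at key
    have hsub2 : volume (f '' s n k) ≤ volume (f '' A) :=
      measure_mono (image_mono (f := f) (fun x hx => hx.1.1))
    have hfin : volume (s n k) ≤ (K : ℝ≥0∞) * volume (f '' A) :=
      key.trans (mul_le_mul_right hsub2 _)
    rw [h0, mul_zero] at hfin
    exact le_antisymm hfin zero_le
  exact measure_mono_null hcover
    (measure_iUnion_null fun n => measure_iUnion_null fun k => hnull n k)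
end

section
/- Let I ⊆ ℝ be an interval, E a Banach space, and A : I → End(E) locally Bochner integrable. Then there exists a unique evolution operator for A in E, i.e., a unique function X : I × I → End(E) such that for each s ∈ I, X(·, s) is continuous with X(t, s) − X(u, s) = ∫_u^t A(λ) ∘ X(λ, s) dλ for all u, t ∈ I, and X(s, s) = id_E. -/
open MeasureTheory Set intervalIntegral

/-- An evolution operator for `A` in `E` on the interval `I`: for each `s ∈ I`,
`X(·, s)` is a continuous operator solution of `X' = A ∘ X` with `X(s,s) = id`. -/
def IsEvolutionOperator {E : Type*} [NormedAddCommGroup E] [NormedSpace ℝ E]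
    (I : Set ℝ) (A : ℝ → E →L[ℝ] E) (X : ℝ → ℝ → E →L[ℝ] E) : Prop :=
  ∀ s ∈ I, ContinuousOn (fun t => X t s) I ∧ X s s = ContinuousLinearMap.id ℝ E ∧
    ∀ u ∈ I, ∀ t ∈ I, X t s - X u s = ∫ τ in u..t, (A τ).comp (X τ s)

namespace Stmt4Aux
open scoped NNReal
set_option linter.unusedSectionVars false
set_option linter.unusedVariables false
set_option synthInstance.maxHeartbeats 1000000
set_option maxHeartbeats 1000000
set_option linter.unusedSectionVars false
set_option linter.unusedVariables false
variable {E : Type*} [NormedAddCommGroup E] [NormedSpace ℝ E] [CompleteSpace E]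

def Sol (A : ℝ → E →L[ℝ] E) (a b s : ℝ) (v : E →L[ℝ] E) (Y : ℝ → E →L[ℝ] E) : Prop :=
  ContinuousOn Y (Icc a b) ∧ ∀ t ∈ Icc a b, Y t = v + ∫ τ in s..t, A τ * Y τ

variable {A : ℝ → E →L[ℝ] E} {a b s m u t : ℝ} {v : E →L[ℝ] E}

lemma integ_mul (hA : IntervalIntegrable A volume a b)
    (hu : u ∈ Icc a b) (ht : t ∈ Icc a b) {Y : ℝ → E →L[ℝ] E}
    (hY : ContinuousOn Y (Icc a b)) :
    IntervalIntegrable (fun τ => A τ * Y τ) volume u t := by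
  have hsub : uIcc u t ⊆ Icc a b := uIcc_subset_Icc hu ht
  exact (hA.mono_set (hsub.trans Icc_subset_uIcc)).mul_continuousOn (hY.mono hsub)

lemma est (hs : s ∈ Icc a b) (ht : t ∈ Icc a b)
    (hA : IntervalIntegrable A volume a b)
    {g : ℝ → E →L[ℝ] E} (hg : ContinuousOn g (Icc a b)) {C : ℝ}
    (hgC : ∀ τ ∈ Icc a b, ‖g τ‖ ≤ C) :
    ‖∫ τ in s..t, A τ * g τ‖ ≤ (∫ τ in a..b, ‖A τ‖) * C := by
  have hab : a ≤ b := hs.1.trans hs.2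
  have hnormint : IntervalIntegrable (fun τ => ‖A τ * g τ‖) volume a b :=
    (integ_mul hA (left_mem_Icc.2 hab) (right_mem_Icc.2 hab) hg).norm
  have hAC : IntervalIntegrable (fun τ => ‖A τ‖ * C) volume a b := hA.norm.mul_const C
  calc ‖∫ τ in s..t, A τ * g τ‖
      ≤ |∫ τ in s..t, ‖A τ * g τ‖| := norm_integral_le_abs_integral_norm
    _ ≤ |∫ τ in a..b, ‖A τ * g τ‖| := by
        refine abs_integral_mono_interval
          (uIoc_subset_uIoc_of_uIcc_subset_uIcc (uIcc_subset_uIcc (Icc_subset_uIcc hs) (Icc_subset_uIcc ht)))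
          (Filter.Eventually.of_forall fun τ => norm_nonneg _) hnormint
    _ = ∫ τ in a..b, ‖A τ * g τ‖ := by
        rw [abs_of_nonneg]
        exact integral_nonneg hab fun τ _ => norm_nonneg _
    _ ≤ ∫ τ in a..b, ‖A τ‖ * C := by
        refine integral_mono_on hab hnormint hAC fun τ hτ => ?_
        exact (norm_mul_le _ _).trans
          (mul_le_mul_of_nonneg_left (hgC τ hτ) (norm_nonneg _))
    _ = (∫ τ in a..b, ‖A τ‖) * C := integral_mul_const _ _

/-- Local existence and uniqueness by contraction. -/
lemma localEU (hs : s ∈ Icc a b) (hA : IntervalIntegrable A volume a b)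
    (hhalf : (∫ τ in a..b, ‖A τ‖) ≤ 1/2) (v : E →L[ℝ] E) :
    (∃ Y, Sol A a b s v Y) ∧
      ∀ Y Z, Sol A a b s v Y → Sol A a b s v Z → EqOn Y Z (Icc a b) := by
  have hab : a ≤ b := hs.1.trans hs.2
  haveI : Nonempty (Icc a b) := ⟨⟨s, hs⟩⟩
  haveI : CompactSpace (Icc a b) := isCompact_iff_compactSpace.mp isCompact_Icc
  -- the Picard map
  have hcontext : ∀ Y : C(Icc a b, E →L[ℝ] E), Continuous (IccExtend hab ⇑Y) :=
    fun Y => Y.continuous.Icc_extend'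
  have hint : ∀ (Y : C(Icc a b, E →L[ℝ] E)) (u t : ℝ), u ∈ Icc a b → t ∈ Icc a b →
      IntervalIntegrable (fun τ => A τ * IccExtend hab ⇑Y τ) volume u t :=
    fun Y u t hu ht => integ_mul hA hu ht (hcontext Y).continuousOn
  have hprim : ∀ Y : C(Icc a b, E →L[ℝ] E),
      ContinuousOn (fun x => v + ∫ τ in s..x, A τ * IccExtend hab ⇑Y τ) (Icc a b) := by
    intro Y
    have := continuousOn_primitive_interval'
      (hint Y a b (left_mem_Icc.2 hab) (right_mem_Icc.2 hab))
      (by rwa [uIcc_of_le hab])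
    rw [uIcc_of_le hab] at this
    exact continuousOn_const.add this
  set Φ : C(Icc a b, E →L[ℝ] E) → C(Icc a b, E →L[ℝ] E) := fun Y =>
    ⟨fun x => v + ∫ τ in s..(x:ℝ), A τ * IccExtend hab ⇑Y τ, (hprim Y).restrict⟩ with hΦ
  have hΦapp : ∀ (Y : C(Icc a b, E →L[ℝ] E)) (x : Icc a b),
      Φ Y x = v + ∫ τ in s..(x:ℝ), A τ * IccExtend hab ⇑Y τ := fun Y x => rfl
  -- contraction
  have hlip : LipschitzWith (1/2 : ℝ≥0) Φ := by
    refine LipschitzWith.of_dist_le_mul fun Y Z => ?_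
    have h2 : ((1/2 : ℝ≥0) : ℝ) = 1/2 := by norm_num
    rw [h2]
    refine (ContinuousMap.dist_le (by positivity)).2 fun x => ?_
    rw [dist_eq_norm, hΦapp, hΦapp]
    calc ‖(v + ∫ τ in s..(x:ℝ), A τ * IccExtend hab ⇑Y τ) -
          (v + ∫ τ in s..(x:ℝ), A τ * IccExtend hab ⇑Z τ)‖
        = ‖∫ τ in s..(x:ℝ), (A τ * IccExtend hab ⇑Y τ - A τ * IccExtend hab ⇑Z τ)‖ := by
          rw [add_sub_add_left_eq_sub, integral_sub (hint Y s x hs x.2) (hint Z s x hs x.2)]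
      _ = ‖∫ τ in s..(x:ℝ), A τ * (IccExtend hab ⇑Y τ - IccExtend hab ⇑Z τ)‖ := by
          congr 1
          exact integral_congr fun τ _ => (mul_sub _ _ _).symm
      _ ≤ (∫ τ in a..b, ‖A τ‖) * dist Y Z := by
          refine est hs x.2 hA ((hcontext Y).sub (hcontext Z)).continuousOn fun τ hτ => ?_
          rw [Pi.sub_apply, IccExtend_of_mem hab _ hτ, IccExtend_of_mem hab _ hτ, ← dist_eq_norm]
          exact ContinuousMap.dist_apply_le_dist _
      _ ≤ 1/2 * dist Y Z := mul_le_mul_of_nonneg_right hhalf dist_nonneg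
  have hcontr : ContractingWith (1/2 : ℝ≥0) Φ := ⟨by rw [← NNReal.coe_lt_coe]; norm_num, hlip⟩
  constructor
  · set Y₀ := ContractingWith.fixedPoint Φ hcontr with hY₀
    have hfix : Φ Y₀ = Y₀ := hcontr.fixedPoint_isFixedPt
    refine ⟨IccExtend hab ⇑Y₀, (hcontext Y₀).continuousOn, fun t ht => ?_⟩
    have h1 : IccExtend hab ⇑Y₀ t = Y₀ ⟨t, ht⟩ := IccExtend_of_mem hab _ ht
    rw [h1]
    conv_lhs => rw [← hfix]
    exact hΦapp Y₀ ⟨t, ht⟩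
  · intro Y Z hY hZ
    have mkfix : ∀ (W : ℝ → E →L[ℝ] E) (hW : Sol A a b s v W),
        Φ ⟨(Icc a b).restrict W, hW.1.restrict⟩ = ⟨(Icc a b).restrict W, hW.1.restrict⟩ := by
      intro W hW
      refine ContinuousMap.ext fun x => ?_
      rw [hΦapp]
      have hcg : EqOn (fun τ => A τ * IccExtend hab ⇑(⟨(Icc a b).restrict W, hW.1.restrict⟩ :
          C(Icc a b, E →L[ℝ] E)) τ) (fun τ => A τ * W τ) (uIcc s (x:ℝ)) := by
        intro τ hτ
        have hτ' : τ ∈ Icc a b := uIcc_subset_Icc hs x.2 hτ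
        simp only [IccExtend_of_mem hab _ hτ']
        rfl
      rw [integral_congr hcg]
      exact (hW.2 x x.2).symm
    have heq := hcontr.fixedPoint_unique' (mkfix Y hY) (mkfix Z hZ)
    intro t ht
    exact ContinuousMap.congr_fun heq ⟨t, ht⟩
lemma Sol.mono {a' b' : ℝ} {Y : ℝ → E →L[ℝ] E} (hY : Sol A a b s v Y)
    (ha : a ≤ a') (hb : b' ≤ b) : Sol A a' b' s v Y :=
  ⟨hY.1.mono (Icc_subset_Icc ha hb), fun t ht => hY.2 t (Icc_subset_Icc ha hb ht)⟩

lemma Sol.rebase {Y : ℝ → E →L[ℝ] E} (hY : Sol A a b s v Y)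
    (hA : IntervalIntegrable A volume a b) (hs : s ∈ Icc a b) (hm : m ∈ Icc a b) :
    Sol A a b m (Y m) Y := by
  refine ⟨hY.1, fun t ht => ?_⟩
  have hadd : (∫ τ in s..m, A τ * Y τ) + ∫ τ in m..t, A τ * Y τ = ∫ τ in s..t, A τ * Y τ :=
    integral_add_adjacent_intervals (integ_mul hA hs hm hY.1) (integ_mul hA hm ht hY.1)
  rw [hY.2 t ht, hY.2 m hm, ← hadd, add_assoc]

lemma setIic : {x : ℝ | x ≤ m} = Iic m := by ext x; simp [Iic]
lemma setIoi : {x : ℝ | ¬ x ≤ m} = Ioi m := by ext x; simp [Ioi]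

lemma glue_cont (ham : a ≤ m) (hmb : m ≤ b) {Y Z : ℝ → E →L[ℝ] E}
    (hYc : ContinuousOn Y (Icc a m)) (hZc : ContinuousOn Z (Icc m b))
    (hYZ : Y m = Z m) :
    ContinuousOn (fun t => if t ≤ m then Y t else Z t) (Icc a b) := by
  refine ContinuousOn.if ?_ ?_ ?_
  · intro x hx
    have hxm : x = m := by
      have := hx.2
      rw [setIic, frontier_Iic] at this
      exact this
    subst hxm; exact hYZ
  · have h1 : Icc a b ∩ closure {x : ℝ | x ≤ m} = Icc a m := by
      rw [setIic, closure_Iic]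
      ext x
      simp only [mem_inter_iff, mem_Icc, mem_Iic]
      exact ⟨fun h => ⟨h.1.1, h.2⟩, fun h => ⟨⟨h.1, h.2.trans hmb⟩, h.2⟩⟩
    rw [h1]; exact hYc
  · have h2 : Icc a b ∩ closure {x : ℝ | ¬ x ≤ m} = Icc m b := by
      rw [setIoi, closure_Ioi]
      ext x
      simp only [mem_inter_iff, mem_Icc, mem_Ici]
      exact ⟨fun h => ⟨h.2, h.1.2⟩, fun h => ⟨⟨ham.trans h.1, h.2⟩, h.1⟩⟩
    rw [h2]; exact hZc

lemma glue_left (ham : a ≤ m) (hmb : m ≤ b)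
    (hA : IntervalIntegrable A volume a b) (hs : s ∈ Icc a m)
    {Y Z : ℝ → E →L[ℝ] E} (hY : Sol A a m s v Y) (hZ : Sol A m b m (Y m) Z) :
    Sol A a b s v (fun t => if t ≤ m then Y t else Z t) := by
  have hab : a ≤ b := ham.trans hmb
  set W : ℝ → E →L[ℝ] E := fun t => if t ≤ m then Y t else Z t with hWdef
  have hZm : Z m = Y m := by simpa using hZ.2 m (left_mem_Icc.2 hmb)
  have hWY : EqOn W Y (Icc a m) := fun t ht => if_pos ht.2
  have hWZ : EqOn W Z (Icc m b) := by
    intro t ht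
    by_cases h : t ≤ m
    · have htm : t = m := le_antisymm h ht.1
      subst htm
      simp only [hWdef, if_pos h, hZm]
    · exact if_neg h
  have hWc : ContinuousOn W (Icc a b) := glue_cont ham hmb hY.1 hZ.1 hZm.symm
  have hint' : ∀ p q, p ∈ Icc a b → q ∈ Icc a b →
      IntervalIntegrable (fun τ => A τ * W τ) volume p q :=
    fun p q hp hq => integ_mul hA hp hq hWc
  have hsab : s ∈ Icc a b := ⟨hs.1, hs.2.trans hmb⟩
  refine ⟨hWc, fun t ht => ?_⟩
  by_cases h : t ≤ m
  · have htm : t ∈ Icc a m := ⟨ht.1, h⟩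
    rw [show W t = Y t from hWY htm, hY.2 t htm]
    congr 1
    refine (integral_congr fun τ hτ => ?_).symm
    rw [hWY (uIcc_subset_Icc hs htm hτ)]
  · have htm : t ∈ Icc m b := ⟨(not_le.mp h).le, ht.2⟩
    rw [show W t = Z t from hWZ htm, hZ.2 t htm, hY.2 m (right_mem_Icc.2 ham)]
    have c1 : (∫ τ in s..m, A τ * Y τ) = ∫ τ in s..m, A τ * W τ :=
      integral_congr fun τ hτ => by
        rw [hWY (uIcc_subset_Icc hs (right_mem_Icc.2 ham) hτ)]
    have c2 : (∫ τ in m..t, A τ * Z τ) = ∫ τ in m..t, A τ * W τ :=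
      integral_congr fun τ hτ => by
        rw [hWZ (uIcc_subset_Icc (left_mem_Icc.2 hmb) htm hτ)]
    rw [c1, c2, add_assoc,
      integral_add_adjacent_intervals (hint' s m hsab ⟨ham, hmb⟩) (hint' m t ⟨ham, hmb⟩ ht)]

lemma glue_right (ham : a ≤ m) (hmb : m ≤ b)
    (hA : IntervalIntegrable A volume a b) (hs : s ∈ Icc m b)
    {Y Z : ℝ → E →L[ℝ] E} (hZ : Sol A m b s v Z) (hY : Sol A a m m (Z m) Y) :
    Sol A a b s v (fun t => if t ≤ m then Y t else Z t) := by
  have hab : a ≤ b := ham.trans hmb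
  set W : ℝ → E →L[ℝ] E := fun t => if t ≤ m then Y t else Z t with hWdef
  have hYm : Y m = Z m := by simpa using hY.2 m (right_mem_Icc.2 ham)
  have hWY : EqOn W Y (Icc a m) := fun t ht => if_pos ht.2
  have hWZ : EqOn W Z (Icc m b) := by
    intro t ht
    by_cases h : t ≤ m
    · have htm : t = m := le_antisymm h ht.1
      subst htm
      simp only [hWdef, if_pos h, hYm]
    · exact if_neg h
  have hWc : ContinuousOn W (Icc a b) := glue_cont ham hmb hY.1 hZ.1 hYm
  have hint' : ∀ p q, p ∈ Icc a b → q ∈ Icc a b →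
      IntervalIntegrable (fun τ => A τ * W τ) volume p q :=
    fun p q hp hq => integ_mul hA hp hq hWc
  have hsab : s ∈ Icc a b := ⟨ham.trans hs.1, hs.2⟩
  refine ⟨hWc, fun t ht => ?_⟩
  by_cases h : t ≤ m
  · have htm : t ∈ Icc a m := ⟨ht.1, h⟩
    rw [show W t = Y t from hWY htm, hY.2 t htm, hZ.2 m (left_mem_Icc.2 hmb)]
    have c1 : (∫ τ in s..m, A τ * Z τ) = ∫ τ in s..m, A τ * W τ :=
      integral_congr fun τ hτ => by
        rw [hWZ (uIcc_subset_Icc hs (left_mem_Icc.2 hmb) hτ)]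
    have c2 : (∫ τ in m..t, A τ * Y τ) = ∫ τ in m..t, A τ * W τ :=
      integral_congr fun τ hτ => by
        rw [hWY (uIcc_subset_Icc (right_mem_Icc.2 ham) htm hτ)]
    rw [c1, c2, add_assoc,
      integral_add_adjacent_intervals (hint' s m hsab ⟨ham, hmb⟩) (hint' m t ⟨ham, hmb⟩ ht)]
  · have htm : t ∈ Icc m b := ⟨(not_le.mp h).le, ht.2⟩
    rw [show W t = Z t from hWZ htm, hZ.2 t htm]
    congr 1
    refine (integral_congr fun τ hτ => ?_).symm
    rw [hWZ (uIcc_subset_Icc hs htm hτ)]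

lemma globalEU (A : ℝ → E →L[ℝ] E) :
    ∀ (n : ℕ) (a b s : ℝ), s ∈ Icc a b → IntervalIntegrable A volume a b →
      (∫ τ in a..b, ‖A τ‖) ≤ ((n : ℝ) + 1) * (1/2) →
      ∀ v, (∃ Y, Sol A a b s v Y) ∧
        ∀ Y Z, Sol A a b s v Y → Sol A a b s v Z → EqOn Y Z (Icc a b) := by
  intro n
  induction n with
  | zero => exact fun a b s hs hA hb v => localEU hs hA (by simpa using hb) v
  | succ n ih =>
    intro a b s hs hA hbound v
    have hab : a ≤ b := hs.1.trans hs.2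
    by_cases hcase : (∫ τ in a..b, ‖A τ‖) ≤ ((n : ℝ) + 1) * (1/2)
    · exact ih a b s hs hA hcase v
    push_neg at hcase
    have hGc : ContinuousOn (fun x => ∫ τ in a..x, ‖A τ‖) (Icc a b) := by
      have := continuousOn_primitive_interval' hA.norm (left_mem_uIcc (a := a) (b := b))
      rwa [uIcc_of_le hab] at this
    obtain ⟨m, hm, hGm⟩ : ∃ m ∈ Icc a b, (∫ τ in a..m, ‖A τ‖) = ((n:ℝ)+1) * (1/2) := by
      have himg := intermediate_value_Icc hab hGc
      have hmem : (((n:ℝ)+1) * (1/2) : ℝ) ∈ Icc (∫ τ in a..a, ‖A τ‖) (∫ τ in a..b, ‖A τ‖) := by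
        rw [integral_same]
        constructor
        · positivity
        · exact hcase.le
      obtain ⟨m, hm1, hm2⟩ := himg hmem
      exact ⟨m, hm1, hm2⟩
    have hAam : IntervalIntegrable A volume a m := hA.mono_set (by
      rw [uIcc_of_le hab, uIcc_of_le hm.1]; exact Icc_subset_Icc le_rfl hm.2)
    have hAmb : IntervalIntegrable A volume m b := hA.mono_set (by
      rw [uIcc_of_le hab, uIcc_of_le hm.2]; exact Icc_subset_Icc hm.1 le_rfl)
    have hsplit : (∫ τ in a..m, ‖A τ‖) + (∫ τ in m..b, ‖A τ‖) = ∫ τ in a..b, ‖A τ‖ :=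
      integral_add_adjacent_intervals hAam.norm hAmb.norm
    have hImb : (∫ τ in m..b, ‖A τ‖) ≤ 1/2 := by
      have hcast : ((n + 1 : ℕ) : ℝ) = (n : ℝ) + 1 := by push_cast; ring
      rw [hcast] at hbound
      linarith [hsplit, hGm, hbound]
    by_cases hsm : s ≤ m
    · have hs' : s ∈ Icc a m := ⟨hs.1, hsm⟩
      obtain ⟨⟨Y, hY⟩, huniqL⟩ := ih a m s hs' hAam (le_of_eq hGm) v
      obtain ⟨⟨Z, hZ⟩, huniqR⟩ := localEU (left_mem_Icc.2 hm.2) hAmb hImb (Y m)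
      refine ⟨⟨_, glue_left hm.1 hm.2 hA hs' hY hZ⟩, ?_⟩
      intro Y' Z' hY' hZ' t ht
      have e1 : EqOn Y' Z' (Icc a m) :=
        huniqL Y' Z' (hY'.mono le_rfl hm.2) (hZ'.mono le_rfl hm.2)
      have hY'' : Sol A m b m (Y' m) Y' := (hY'.rebase hA hs hm).mono hm.1 le_rfl
      have hZ'' : Sol A m b m (Y' m) Z' := by
        have h2 := (hZ'.rebase hA hs hm).mono hm.1 le_rfl (a' := m) (b' := b)
        rwa [← e1 (right_mem_Icc.2 hm.1)] at h2
      obtain ⟨_, huniqR'⟩ := localEU (left_mem_Icc.2 hm.2) hAmb hImb (Y' m)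
      have e2 := huniqR' Y' Z' hY'' hZ''
      rcases le_total t m with h | h
      · exact e1 ⟨ht.1, h⟩
      · exact e2 ⟨h, ht.2⟩
    · push_neg at hsm
      have hs' : s ∈ Icc m b := ⟨hsm.le, hs.2⟩
      obtain ⟨⟨Z, hZ⟩, huniqR⟩ := localEU hs' hAmb hImb v
      obtain ⟨⟨Y, hY⟩, huniqL⟩ := ih a m m (right_mem_Icc.2 hm.1) hAam (le_of_eq hGm) (Z m)
      refine ⟨⟨_, glue_right hm.1 hm.2 hA hs' hZ hY⟩, ?_⟩
      intro Y' Z' hY' hZ' t ht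
      have e2 : EqOn Y' Z' (Icc m b) :=
        huniqR Y' Z' (hY'.mono hm.1 le_rfl) (hZ'.mono hm.1 le_rfl)
      have hY'' : Sol A a m m (Y' m) Y' := (hY'.rebase hA hs hm).mono le_rfl hm.2
      have hZ'' : Sol A a m m (Y' m) Z' := by
        have h2 := (hZ'.rebase hA hs hm).mono le_rfl hm.2 (a' := a) (b' := m)
        rwa [← e2 (left_mem_Icc.2 hm.2)] at h2
      obtain ⟨_, huniqL'⟩ := ih a m m (right_mem_Icc.2 hm.1) hAam (le_of_eq hGm) (Y' m)
      rcases le_total t m with h | h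
      · exact huniqL' Y' Z' hY'' hZ'' ⟨ht.1, h⟩
      · exact e2 ⟨h, ht.2⟩


lemma exU (A : ℝ → E →L[ℝ] E) {a b s : ℝ} (hs : s ∈ Icc a b)
    (hA : IntervalIntegrable A volume a b) (v : E →L[ℝ] E) :
    (∃ Y, Sol A a b s v Y) ∧
      ∀ Y Z, Sol A a b s v Y → Sol A a b s v Z → EqOn Y Z (Icc a b) := by
  obtain ⟨n, hn⟩ := exists_nat_ge (2 * ∫ τ in a..b, ‖A τ‖)
  refine globalEU A n a b s hs hA (by linarith) v

open Classical in
noncomputable def solFun (A : ℝ → E →L[ℝ] E) (a b s : ℝ) (v : E →L[ℝ] E) : ℝ → E →L[ℝ] E :=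
  if h : ∃ Y, Sol A a b s v Y then h.choose else 0

lemma solFun_spec {v : E →L[ℝ] E} (h : ∃ Y, Sol A a b s v Y) :
    Sol A a b s v (solFun A a b s v) := by
  classical
  rw [solFun]
  rw [dif_pos h]
  exact h.choose_spec

end Stmt4Aux

open Stmt4Aux

set_option maxHeartbeats 1000000 in
/-- Existence and uniqueness of the evolution operator for a locally
Bochner integrable `A : I → End(E)`. -/
theorem stmt4 {E : Type*} [NormedAddCommGroup E] [NormedSpace ℝ E] [CompleteSpace E]
    (I : Set ℝ) (hI : I.OrdConnected) (A : ℝ → E →L[ℝ] E)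
    (hA : ∀ a ∈ I, ∀ b ∈ I, IntervalIntegrable A volume a b) :
    (∃ X, IsEvolutionOperator I A X) ∧
    ∀ X Y, IsEvolutionOperator I A X → IsEvolutionOperator I A Y →
      ∀ s ∈ I, ∀ t ∈ I, X t s = Y t s := by
  classical
  constructor
  · -- existence
    unfold IsEvolutionOperator
    have hminI : ∀ {x y : ℝ}, x ∈ I → y ∈ I → min x y ∈ I := by
      intro x y hx hy
      rcases le_total x y with h | h
      · rwa [min_eq_left h]
      · rwa [min_eq_right h]
    have hmaxI : ∀ {x y : ℝ}, x ∈ I → y ∈ I → max x y ∈ I := by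
      intro x y hx hy
      rcases le_total x y with h | h
      · rwa [max_eq_right h]
      · rwa [max_eq_left h]
    set X : ℝ → ℝ → (E →L[ℝ] E) := fun t s => solFun A (min s t) (max s t) s 1 t with hXdef
    -- the chosen local solutions are solutions
    have fact1 : ∀ s t : ℝ, s ∈ I → t ∈ I →
        Sol A (min s t) (max s t) s 1 (solFun A (min s t) (max s t) s 1) := by
      intro s t hs ht
      exact solFun_spec (exU A ⟨min_le_left s t, le_max_left s t⟩
        (hA _ (hminI hs ht) _ (hmaxI hs ht)) 1).1
    -- coherence
    have hcoh : ∀ s a b : ℝ, s ∈ I → a ∈ I → b ∈ I →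
        ∀ Ybig, Sol A a b s 1 Ybig → s ∈ Icc a b → ∀ t ∈ Icc a b, t ∈ I →
        X t s = Ybig t := by
      intro s a b hsI haI hbI Ybig hYbig hsab t ht htI
      have h1 : a ≤ min s t := le_min hsab.1 ht.1
      have h2 : max s t ≤ b := max_le hsab.2 ht.2
      have hsol := fact1 s t hsI htI
      have hbig' : Sol A (min s t) (max s t) s 1 Ybig := hYbig.mono h1 h2
      obtain ⟨_, huniq⟩ := exU A (⟨min_le_left s t, le_max_left s t⟩ : s ∈ Icc _ _)
        (hA _ (hminI hsI htI) _ (hmaxI hsI htI)) 1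
      exact huniq _ _ hsol hbig' ⟨min_le_right s t, le_max_right s t⟩
    refine ⟨X, fun s hsI => ⟨?_, ?_, ?_⟩⟩
    · -- continuity
      intro t₀ ht₀
      have hleft : ∃ p ∈ I, p ≤ t₀ ∧ ∃ p' < t₀, ∀ x ∈ I, p' < x → p ≤ x := by
        rcases _root_.em (∃ p ∈ I, p < t₀) with ⟨p, hpI, hpt⟩ | hnp
        · exact ⟨p, hpI, hpt.le, p, hpt, fun x _ h => h.le⟩
        · push_neg at hnp
          exact ⟨t₀, ht₀, le_rfl, t₀ - 1, by linarith, fun x hx _ => hnp x hx⟩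
      have hright : ∃ q ∈ I, t₀ ≤ q ∧ ∃ q' > t₀, ∀ x ∈ I, x < q' → x ≤ q := by
        rcases _root_.em (∃ q ∈ I, t₀ < q) with ⟨q, hqI, hqt⟩ | hnq
        · exact ⟨q, hqI, hqt.le, q, hqt, fun x _ h => h.le⟩
        · push_neg at hnq
          exact ⟨t₀, ht₀, le_rfl, t₀ + 1, by linarith, fun x hx _ => hnq x hx⟩
      obtain ⟨p, hpI, hpt₀, p', hp', hp'b⟩ := hleft
      obtain ⟨q, hqI, ht₀q, q', hq', hq'b⟩ := hright
      set a := min s p with ha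
      set b := max s q with hb
      have haI : a ∈ I := hminI hsI hpI
      have hbI : b ∈ I := hmaxI hsI hqI
      have hsab : s ∈ Icc a b := ⟨min_le_left s p, le_max_left s q⟩
      have ht₀ab : t₀ ∈ Icc a b := ⟨(min_le_right s p).trans hpt₀, ht₀q.trans (le_max_right s q)⟩
      obtain ⟨Ybig, hYbig⟩ := (exU A hsab (hA a haI b hbI) 1).1
      have hV : Ioo p' q' ∈ nhds t₀ := Ioo_mem_nhds hp' hq'
      have hsubset : I ∩ Ioo p' q' ⊆ Icc a b := by
        rintro x ⟨hxI, hx1, hx2⟩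
        exact ⟨(min_le_right s p).trans (hp'b x hxI hx1),
          (hq'b x hxI hx2).trans (le_max_right s q)⟩
      have hIab : Icc a b ⊆ I := hI.out haI hbI
      have hcw : ContinuousWithinAt (fun t => X t s) (I ∩ Ioo p' q') t₀ := by
        refine ContinuousWithinAt.congr (((hYbig.1 t₀ ht₀ab).mono hsubset)) ?_ ?_
        · intro y hy
          exact hcoh s a b hsI haI hbI Ybig hYbig hsab y (hsubset hy) hy.1
        · exact hcoh s a b hsI haI hbI Ybig hYbig hsab t₀ ht₀ab ht₀
      exact (continuousWithinAt_inter' (mem_nhdsWithin_of_mem_nhds hV)).mp hcw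
    · -- X s s = id
      have h := fact1 s s hsI hsI
      have hs : s ∈ Icc (min s s) (max s s) := ⟨min_le_left s s, le_max_left s s⟩
      have := h.2 s hs
      rw [intervalIntegral.integral_same] at this
      simp only [hXdef]
      rw [this, add_zero, ContinuousLinearMap.one_def]
    · -- the integral equation
      intro u huI t htI
      set a := min s (min u t) with ha
      set b := max s (max u t) with hb
      have haI : a ∈ I := hminI hsI (hminI huI htI)
      have hbI : b ∈ I := hmaxI hsI (hmaxI huI htI)
      have hsab : s ∈ Icc a b := ⟨min_le_left _ _, le_max_left _ _⟩
      have huab : u ∈ Icc a b :=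
        ⟨(min_le_right s _).trans (min_le_left u t), (le_max_left u t).trans (le_max_right s _)⟩
      have htab : t ∈ Icc a b :=
        ⟨(min_le_right s _).trans (min_le_right u t), (le_max_right u t).trans (le_max_right s _)⟩
      have hIab : Icc a b ⊆ I := hI.out haI hbI
      obtain ⟨Ybig, hYbig⟩ := (exU A hsab (hA a haI b hbI) 1).1
      have hXt : X t s = Ybig t := hcoh s a b hsI haI hbI Ybig hYbig hsab t htab htI
      have hXu : X u s = Ybig u := hcoh s a b hsI haI hbI Ybig hYbig hsab u huab huI
      have hcongr : ∀ τ ∈ uIcc u t, (A τ).comp (X τ s) = A τ * Ybig τ := by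
        intro τ hτ
        have hτab : τ ∈ Icc a b := uIcc_subset_Icc huab htab hτ
        rw [← ContinuousLinearMap.mul_def,
          hcoh s a b hsI haI hbI Ybig hYbig hsab τ hτab (hIab hτab)]
      rw [hXt, hXu, integral_congr hcongr, hYbig.2 t htab, hYbig.2 u huab,
        add_sub_add_left_eq_sub]
      have hadd : (∫ τ in s..u, A τ * Ybig τ) + ∫ τ in u..t, A τ * Ybig τ
          = ∫ τ in s..t, A τ * Ybig τ :=
        integral_add_adjacent_intervals (integ_mul (hA a haI b hbI) hsab huab hYbig.1)
          (integ_mul (hA a haI b hbI) huab htab hYbig.1)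
      rw [← hadd, add_sub_cancel_left]
  · -- uniqueness
    have hminI : ∀ {x y : ℝ}, x ∈ I → y ∈ I → min x y ∈ I := by
      intro x y hx hy
      rcases le_total x y with h | h
      · rwa [min_eq_left h]
      · rwa [min_eq_right h]
    have hmaxI : ∀ {x y : ℝ}, x ∈ I → y ∈ I → max x y ∈ I := by
      intro x y hx hy
      rcases le_total x y with h | h
      · rwa [max_eq_right h]
      · rwa [max_eq_left h]
    intro X Y hX hY s hsI t htI
    set a := min s t with ha
    set b := max s t with hb
    have haI : a ∈ I := hminI hsI htI
    have hbI : b ∈ I := hmaxI hsI htI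
    have hIab : Icc a b ⊆ I := hI.out haI hbI
    have hsab : s ∈ Icc a b := ⟨min_le_left s t, le_max_left s t⟩
    have htab : t ∈ Icc a b := ⟨min_le_right s t, le_max_right s t⟩
    have mkSol : ∀ W : ℝ → ℝ → (E →L[ℝ] E), IsEvolutionOperator I A W →
        Sol A a b s 1 (fun τ => W τ s) := by
      intro W hW
      obtain ⟨hWc, hWid, hWeq⟩ := hW s hsI
      refine ⟨hWc.mono hIab, fun τ hτ => ?_⟩
      have h1 := hWeq s hsI τ (hIab hτ)
      rw [hWid, ← ContinuousLinearMap.one_def] at h1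
      simp only [← ContinuousLinearMap.mul_def] at h1
      exact sub_eq_iff_eq_add'.mp h1
    obtain ⟨_, huniq⟩ := exU A hsab (hA a haI b hbI) 1
    exact huniq _ _ (mkSol X hX) (mkSol Y hY) htab
end

section
/- Let I ⊆ ℝ be an interval, E a Banach space, A : I → End(E) locally Bochner integrable, and X : I × I → End(E) an evolution operator for A in E. Then for all s, t ∈ I, the operator X(t, s) is invertible with inverse X(s, t), and for all s, t, u ∈ I, X(u, t) ∘ X(t, s) = X(u, s). -/
open MeasureTheory Set intervalIntegral

section Aux

variable {R : Type*} [NormedRing R] [NormedSpace ℝ R] [CompleteSpace R]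

/-- Forward uniqueness: a continuous solution of `Y' = A * Y` on `[a, b]` that vanishes
at `a` vanishes identically. -/
lemma evol_key_forward (A Y : ℝ → R) {a b : ℝ} (hab : a ≤ b)
    (hA : IntervalIntegrable A volume a b)
    (hY : ContinuousOn Y (Icc a b)) (hYa : Y a = 0)
    (heq : ∀ u ∈ Icc a b, ∀ t ∈ Icc a b, Y t - Y u = ∫ τ in u..t, A τ * Y τ) :
    ∀ t ∈ Icc a b, Y t = 0 := by
  have hsub : Icc a b ⊆ Y ⁻¹' {0} := by
    apply IsClosed.Icc_subset_of_forall_exists_gt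
    · have h : IsClosed (Icc a b ∩ Y ⁻¹' {0}) :=
        hY.preimage_isClosed_of_isClosed isClosed_Icc isClosed_singleton
      rwa [inter_comm] at h
    · simpa using hYa
    · rintro x ⟨hx0, hxa, hxb⟩ y hy
      have hYx : Y x = 0 := hx0
      have hxab : x ∈ Icc a b := ⟨hxa, hxb.le⟩
      -- the primitive of ‖A‖ based at x
      set g : ℝ → ℝ := fun t => ∫ τ in x..t, ‖A τ‖ with hg_def
      have hAn : IntervalIntegrable (fun τ => ‖A τ‖) volume a b := hA.norm
      have hgc : ContinuousOn g (Icc a b) := by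
        have h := continuousOn_primitive_interval' hAn
          (by rw [uIcc_of_le hab]; exact hxab)
        rwa [uIcc_of_le hab] at h
      have hgx : g x = 0 := integral_same
      obtain ⟨δ, hδpos, hδ⟩ := Metric.continuousWithinAt_iff.mp (hgc x hxab)
        (1/2) (by norm_num)
      set c : ℝ := min (min y b) (x + δ/2) with hc_def
      have hxc : x < c := lt_min (lt_min hy hxb) (by linarith)
      have hcb : c ≤ b := le_trans (min_le_left _ _) (min_le_right _ _)
      have hcy : c ≤ y := le_trans (min_le_left _ _) (min_le_left _ _)
      have hgsmall : ∀ t ∈ Icc x c, g t ≤ 1/2 := by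
        intro t ⟨hxt, htc⟩
        have htab : t ∈ Icc a b := ⟨hxa.trans hxt, htc.trans hcb⟩
        have hdist : dist t x < δ := by
          rw [Real.dist_eq, abs_of_nonneg (by linarith)]
          have : c ≤ x + δ/2 := min_le_right _ _
          linarith
        have := hδ htab hdist
        rw [hgx, Real.dist_eq, sub_zero] at this
        exact le_of_lt (lt_of_le_of_lt (le_abs_self _) this)
      -- Y vanishes on [x, c]
      have hKsub : Icc x c ⊆ Icc a b := Icc_subset_Icc hxa hcb
      obtain ⟨m, hm, hmax⟩ := (isCompact_Icc : IsCompact (Icc x c)).exists_isMaxOn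
        (nonempty_Icc.mpr hxc.le) ((hY.mono hKsub).norm)
      set M : ℝ := ‖Y m‖ with hM_def
      have hbound : ∀ t ∈ Icc x c, ‖Y t‖ ≤ 1/2 * M := by
        intro t ht
        have hxt : x ≤ t := ht.1
        have htab : t ∈ Icc a b := hKsub ht
        have hYt : Y t = ∫ τ in x..t, A τ * Y τ := by
          have h := heq x hxab t htab
          rwa [hYx, sub_zero] at h
        have hsub1 : uIcc x t ⊆ uIcc a b := by
          rw [uIcc_of_le hxt, uIcc_of_le hab]
          exact Icc_subset_Icc hxa (le_trans ht.2 hcb)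
        have hint : IntervalIntegrable (fun τ => A τ * Y τ) volume x t :=
          (hA.mono_set hsub1).mul_continuousOn
            (by rw [uIcc_of_le hxt]
                exact (hY.mono hKsub).mono (Icc_subset_Icc le_rfl ht.2))
        calc ‖Y t‖ = ‖∫ τ in x..t, A τ * Y τ‖ := by rw [hYt]
          _ ≤ ∫ τ in x..t, ‖A τ * Y τ‖ := norm_integral_le_integral_norm hxt
          _ ≤ ∫ τ in x..t, ‖A τ‖ * M := by
              refine integral_mono_on hxt hint.norm
                (((hA.norm.mono_set hsub1)).mul_const M) ?_
              intro τ hτ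
              have hτK : τ ∈ Icc x c := ⟨hτ.1, hτ.2.trans ht.2⟩
              exact (norm_mul_le _ _).trans
                (mul_le_mul_of_nonneg_left (hmax hτK) (norm_nonneg _))
          _ = g t * M := by rw [hg_def]; exact integral_mul_const M _
          _ ≤ 1/2 * M := mul_le_mul_of_nonneg_right
                (hgsmall t ht) (norm_nonneg _)
      have hM0 : M ≤ 0 := by
        have := hbound m hm
        rw [← hM_def] at this
        linarith
      have hzero : ∀ t ∈ Icc x c, Y t = 0 := by
        intro t ht
        have := hbound t ht
        have : ‖Y t‖ ≤ 0 := by linarith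
        simpa [norm_le_zero_iff] using this
      exact ⟨c, hzero c ⟨hxc.le, le_rfl⟩, hxc, hcy⟩
  intro t ht
  exact hsub ht

/-- Backward uniqueness, by time reversal. -/
lemma evol_key_backward (A Y : ℝ → R) {a b : ℝ} (hba : b ≤ a)
    (hA : IntervalIntegrable A volume b a)
    (hY : ContinuousOn Y (Icc b a)) (hYa : Y a = 0)
    (heq : ∀ u ∈ Icc b a, ∀ t ∈ Icc b a, Y t - Y u = ∫ τ in u..t, A τ * Y τ) :
    ∀ t ∈ Icc b a, Y t = 0 := by
  set c : ℝ := a + b with hc_def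
  have hmaps : ∀ σ ∈ Icc b a, c - σ ∈ Icc b a := by
    rintro σ ⟨h1, h2⟩
    exact ⟨by simp [hc_def]; linarith, by simp [hc_def]; linarith⟩
  set Z : ℝ → R := fun σ => Y (c - σ) with hZ_def
  set A' : ℝ → R := fun σ => -A (c - σ) with hA'_def
  have hZcont : ContinuousOn Z (Icc b a) :=
    hY.comp (continuous_const.sub continuous_id).continuousOn hmaps
  have hA'i : IntervalIntegrable A' volume b a := by
    have h := (hA.comp_sub_left c).symm
    have h1 : c - b = a := by rw [hc_def]; ring
    have h2 : c - a = b := by rw [hc_def]; ring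
    rw [h1, h2] at h
    exact h.neg
  have hZb : Z b = 0 := by
    have : c - b = a := by rw [hc_def]; ring
    rw [hZ_def]; simp only [this]; exact hYa
  have heqZ : ∀ u ∈ Icc b a, ∀ t ∈ Icc b a, Z t - Z u = ∫ σ in u..t, A' σ * Z σ := by
    intro u hu t ht
    have h1 := heq (c - u) (hmaps u hu) (c - t) (hmaps t ht)
    have h2 : (∫ σ in u..t, A' σ * Z σ)
        = ∫ σ in u..t, -((fun τ => A τ * Y τ) (c - σ)) := by
      simp [hA'_def, hZ_def, neg_mul]
    rw [h2, intervalIntegral.integral_neg, integral_comp_sub_left (fun τ => A τ * Y τ) c,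
      ← integral_symm, ← h1]
  intro t ht
  have := evol_key_forward A' Z hba hA'i hZcont hZb heqZ (c - t) (hmaps t ht)
  have hct : c - (c - t) = t := by ring
  rw [hZ_def] at this
  simpa [hct] using this

/-- Uniqueness on an order-connected set. -/
lemma evol_uniq {I : Set ℝ} (hI : I.OrdConnected) (A Y : ℝ → R)
    (hA : ∀ a ∈ I, ∀ b ∈ I, IntervalIntegrable A volume a b)
    (hY : ContinuousOn Y I)
    (heq : ∀ u ∈ I, ∀ t ∈ I, Y t - Y u = ∫ τ in u..t, A τ * Y τ)
    {s : ℝ} (hs : s ∈ I) (hYs : Y s = 0) :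
    ∀ t ∈ I, Y t = 0 := by
  intro t ht
  rcases le_total s t with hst | hts
  · have hIcc : Icc s t ⊆ I := hI.out hs ht
    exact evol_key_forward A Y hst (hA s hs t ht) (hY.mono hIcc) hYs
      (fun u hu v hv => heq u (hIcc hu) v (hIcc hv)) t ⟨hst, le_rfl⟩
  · have hIcc : Icc t s ⊆ I := hI.out ht hs
    exact evol_key_backward A Y hts (hA t ht s hs) (hY.mono hIcc) hYs
      (fun u hu v hv => heq u (hIcc hu) v (hIcc hv)) t ⟨le_rfl, hts⟩

end Aux

/-- Every evolution operator consists of invertible operators, with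
`X(t,s)⁻¹ = X(s,t)`, and satisfies the cocycle identity `X(u,t) X(t,s) = X(u,s)`. -/
theorem stmt5 {E : Type*} [NormedAddCommGroup E] [NormedSpace ℝ E] [CompleteSpace E]
    (I : Set ℝ) (hI : I.OrdConnected) (A : ℝ → E →L[ℝ] E)
    (hA : ∀ a ∈ I, ∀ b ∈ I, IntervalIntegrable A volume a b)
    (X : ℝ → ℝ → E →L[ℝ] E) (hX : IsEvolutionOperator I A X) :
    (∀ s ∈ I, ∀ t ∈ I, (X t s).comp (X s t) = ContinuousLinearMap.id ℝ E ∧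
      (X s t).comp (X t s) = ContinuousLinearMap.id ℝ E) ∧
    ∀ s ∈ I, ∀ t ∈ I, ∀ u ∈ I, (X u t).comp (X t s) = X u s := by
  -- work in the normed ring `E →L[ℝ] E`, where `comp = *`
  have hcomp : ∀ f g : E →L[ℝ] E, f.comp g = f * g := fun _ _ => rfl
  -- cocycle identity
  have cocycle : ∀ s ∈ I, ∀ t ∈ I, ∀ u ∈ I, X u t * X t s = X u s := by
    intro s hs t ht u hu
    obtain ⟨hXs_cont, hXss, hXs_eq⟩ := hX s hs
    obtain ⟨hXt_cont, hXtt, hXt_eq⟩ := hX t ht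
    set C : E →L[ℝ] E := X t s with hC_def
    set Y : ℝ → (E →L[ℝ] E) := fun v => X v t * C - X v s with hY_def
    have hYcont : ContinuousOn Y I := (hXt_cont.mul continuousOn_const).sub hXs_cont
    have hYt : Y t = 0 := by
      have h1 : X t t * C = C := by
        rw [hXtt]
        exact one_mul C
      simp only [hY_def, h1, hC_def, sub_self]
      rw [hXtt]; exact sub_eq_zero.mpr (one_mul _)
    have heqY : ∀ u' ∈ I, ∀ v ∈ I, Y v - Y u' = ∫ τ in u'..v, A τ * Y τ := by
      intro u' hu' v hv
      have hsubI : uIcc u' v ⊆ I := hI.uIcc_subset hu' hv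
      have hAint : IntervalIntegrable A volume u' v := hA u' hu' v hv
      have hint_t : IntervalIntegrable (fun τ => A τ * X τ t) volume u' v :=
        hAint.mul_continuousOn (hXt_cont.mono hsubI)
      have hint_s : IntervalIntegrable (fun τ => A τ * X τ s) volume u' v :=
        hAint.mul_continuousOn (hXs_cont.mono hsubI)
      have h1 : X v t - X u' t = ∫ τ in u'..v, A τ * X τ t := by
        simpa [hcomp] using hXt_eq u' hu' v hv
      have h2 : X v s - X u' s = ∫ τ in u'..v, A τ * X τ s := by
        simpa [hcomp] using hXs_eq u' hu' v hv
      have h3 : Y v - Y u' = (X v t - X u' t) * C - (X v s - X u' s) := by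
        simp only [hY_def, sub_mul]; abel
      have h4 : (∫ τ in u'..v, A τ * X τ t) * C
          = ∫ τ in u'..v, (A τ * X τ t) * C := by
        have hL := ((ContinuousLinearMap.compL ℝ E E E).flip C).intervalIntegral_comp_comm hint_t
        simpa [hcomp] using hL.symm
      rw [h3, h1, h2, h4, ← integral_sub (hint_t.mul_const C) hint_s]
      congr 1
      ext τ
      simp only [hY_def, mul_sub, mul_assoc]
    have := evol_uniq hI A Y hA hYcont heqY ht hYt u hu
    have h := sub_eq_zero.mp this
    simpa [hY_def, hC_def] using h
  constructor
  · intro s hs t ht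
    obtain ⟨_, hXss, _⟩ := hX s hs
    obtain ⟨_, hXtt, _⟩ := hX t ht
    constructor
    · rw [hcomp, cocycle t ht s hs t ht, hXtt]
    · rw [hcomp, cocycle s hs t ht s hs, hXss]
  · intro s hs t ht u hu
    rw [hcomp]
    exact cocycle s hs t ht u hu
end

section
/- Let I ⊆ ℝ be an interval, E a Banach space, A : I → End(E) locally Bochner integrable, and X an evolution operator for A in E. Then for all s, t ∈ I with s ≤ t, both ‖X(t, s)‖ ≤ exp(∫_s^t ‖A(λ)‖ dλ) and ‖X(t, s)⁻¹‖ ≤ exp(∫_s^t ‖A(λ)‖ dλ). -/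
open MeasureTheory Set intervalIntegral

lemma exp_sub_exp_le {x y m : ℝ} (hx : x ≤ m) (hy : y ≤ m) :
    |Real.exp x - Real.exp y| ≤ Real.exp m * |x - y| := by
  rcases le_total x y with h | h
  · rw [abs_sub_comm, abs_of_nonneg (sub_nonneg.2 (Real.exp_le_exp.2 h)),
      abs_sub_comm, abs_of_nonneg (sub_nonneg.2 h)]
    have h1 := Real.add_one_le_exp (x - y)
    have h2 : Real.exp y ≤ Real.exp m := Real.exp_le_exp.2 hy
    have h3 : Real.exp y > 0 := Real.exp_pos y
    have : Real.exp x = Real.exp y * Real.exp (x - y) := by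
      rw [← Real.exp_add]; ring_nf
    nlinarith
  · rw [abs_of_nonneg (sub_nonneg.2 (Real.exp_le_exp.2 h)), abs_of_nonneg (sub_nonneg.2 h)]
    have h1 := Real.add_one_le_exp (y - x)
    have h2 : Real.exp x ≤ Real.exp m := Real.exp_le_exp.2 hx
    have h3 : Real.exp x > 0 := Real.exp_pos x
    have : Real.exp y = Real.exp x * Real.exp (y - x) := by
      rw [← Real.exp_add]; ring_nf
    nlinarith

lemma key_cont (b : ℝ → ℝ) (hb : Continuous b) (s u : ℝ) :
    ∫ τ in s..u, b τ * Real.exp (∫ x in s..τ, b x)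
      = Real.exp (∫ x in s..u, b x) - 1 := by
  have hG : Continuous fun y => ∫ x in s..y, b x :=
    continuous_primitive (fun a b => hb.intervalIntegrable a b) s
  have hd : ∀ τ ∈ uIcc s u, HasDerivAt (fun y => Real.exp (∫ x in s..y, b x))
      (b τ * Real.exp (∫ x in s..τ, b x)) τ := by
    intro τ _
    have h1 : HasDerivAt (fun y => ∫ x in s..y, b x) (b τ) τ :=
      (hb.integral_hasStrictDerivAt s τ).hasDerivAt
    simpa [mul_comm] using h1.exp
  have hint : IntervalIntegrable (fun τ => b τ * Real.exp (∫ x in s..τ, b x)) volume s u :=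
    (hb.mul hG.rexp).intervalIntegrable s u
  have := integral_eq_sub_of_hasDerivAt hd hint
  rw [this, intervalIntegral.integral_same, Real.exp_zero]

lemma prim_bound {g : ℝ → ℝ} (hg : Integrable g volume) (s τ : ℝ) :
    |∫ x in s..τ, g x| ≤ ∫ x, ‖g x‖ := by
  calc |∫ x in s..τ, g x| ≤ |∫ x in s..τ, ‖g x‖| := by
        rw [← Real.norm_eq_abs]
        exact intervalIntegral.norm_integral_le_abs_integral_norm
    _ ≤ ∫ x, ‖g x‖ := by
        rcases le_total s τ with h | h
        · rw [abs_of_nonneg (intervalIntegral.integral_nonneg h fun x _ => norm_nonneg _),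
            intervalIntegral.integral_of_le h]
          exact setIntegral_le_integral hg.norm (ae_of_all _ fun x => norm_nonneg _)
        · rw [intervalIntegral.integral_symm, abs_neg, abs_of_nonneg
            (intervalIntegral.integral_nonneg h fun x _ => norm_nonneg _),
            intervalIntegral.integral_of_le h]
          exact setIntegral_le_integral hg.norm (ae_of_all _ fun x => norm_nonneg _)

lemma key_id {f : ℝ → ℝ} (hf : Integrable f volume) (s u : ℝ) (hsu : s ≤ u) :
    ∫ τ in s..u, f τ * Real.exp (∫ x in s..τ, f x)
      = Real.exp (∫ x in s..u, f x) - 1 := by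
  set K : ℝ := ∫ x, ‖f x‖ with hK
  have hK0 : 0 ≤ K := integral_nonneg fun x => norm_nonneg _
  set C : ℝ := Real.exp K + (K + 1) * Real.exp (K + 1) + Real.exp (K + 1) with hC
  have hC0 : 0 < C := by positivity
  set F : ℝ → ℝ := fun τ => ∫ x in s..τ, f x with hF
  have hFcont : Continuous F := continuous_primitive (fun a b => hf.intervalIntegrable) s
  have hFbound : ∀ τ : ℝ, |F τ| ≤ K := fun τ => prim_bound hf s τ
  set d : ℝ := |(∫ τ in s..u, f τ * Real.exp (F τ)) - (Real.exp (F u) - 1)| with hd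
  have main : ∀ ε : ℝ, 0 < ε → ε ≤ 1 → d ≤ ε * C := by
    intro ε hε hε1
    obtain ⟨b, -, hb1, hbc, hbint⟩ := hf.exists_hasCompactSupport_integral_sub_le hε
    set G : ℝ → ℝ := fun τ => ∫ x in s..τ, b x with hG
    have hGcont : Continuous G := continuous_primitive (fun a b => hbc.intervalIntegrable a b) s
    have hFG : ∀ τ : ℝ, |F τ - G τ| ≤ ε := by
      intro τ
      have e : F τ - G τ = ∫ x in s..τ, (f x - b x) := by
        rw [intervalIntegral.integral_sub hf.intervalIntegrable (hbc.intervalIntegrable s τ)]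
      rw [e]
      exact (prim_bound (hf.sub hbint) s τ).trans hb1
    have hGbound : ∀ τ : ℝ, |G τ| ≤ K + ε := by
      intro τ
      have h1 := hFbound τ
      have h2 := hFG τ
      have h3 := abs_sub_abs_le_abs_sub (G τ) (F τ)
      rw [abs_sub_comm] at h3
      linarith
    have hpt : ∀ τ : ℝ, ‖f τ * Real.exp (F τ) - b τ * Real.exp (G τ)‖
        ≤ ‖f τ - b τ‖ * Real.exp K + ‖b τ‖ * (Real.exp (K + ε) * ε) := by
      intro τ
      have e1 : f τ * Real.exp (F τ) - b τ * Real.exp (G τ)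
          = (f τ - b τ) * Real.exp (F τ) + b τ * (Real.exp (F τ) - Real.exp (G τ)) := by ring
      rw [e1]
      refine (norm_add_le _ _).trans (add_le_add ?_ ?_)
      · rw [norm_mul, Real.norm_eq_abs (Real.exp _), abs_of_nonneg (Real.exp_pos _).le]
        exact mul_le_mul_of_nonneg_left
          (Real.exp_le_exp.2 ((le_abs_self _).trans (hFbound τ))) (norm_nonneg _)
      · rw [norm_mul]
        refine mul_le_mul_of_nonneg_left ?_ (norm_nonneg _)
        rw [Real.norm_eq_abs]
        refine (exp_sub_exp_le (m := K + ε) ?_ ?_).trans ?_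
        · exact ((le_abs_self _).trans (hFbound τ)).trans (by linarith)
        · exact (le_abs_self _).trans (hGbound τ)
        · exact mul_le_mul_of_nonneg_left (hFG τ) (Real.exp_pos _).le
    have hfF : IntervalIntegrable (fun τ => f τ * Real.exp (F τ)) volume s u :=
      hf.intervalIntegrable.mul_continuousOn (hFcont.rexp.continuousOn)
    have hbG : IntervalIntegrable (fun τ => b τ * Real.exp (G τ)) volume s u :=
      (hbc.mul hGcont.rexp).intervalIntegrable s u
    have hfb : IntervalIntegrable (fun τ => f τ - b τ) volume s u :=
      (hf.sub hbint).intervalIntegrable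
    have hi1 : IntervalIntegrable (fun τ => ‖f τ - b τ‖ * Real.exp K) volume s u :=
      hfb.norm.mul_const _
    have hi2 : IntervalIntegrable (fun τ => ‖b τ‖ * (Real.exp (K + ε) * ε)) volume s u :=
      (hbc.norm.mul continuous_const).intervalIntegrable s u
    have hIdiff : |(∫ τ in s..u, f τ * Real.exp (F τ)) - ∫ τ in s..u, b τ * Real.exp (G τ)|
        ≤ ε * Real.exp K + (K + ε) * (Real.exp (K + ε) * ε) := by
      have e2 : (∫ τ in s..u, f τ * Real.exp (F τ)) - (∫ τ in s..u, b τ * Real.exp (G τ))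
          = ∫ τ in s..u, (f τ * Real.exp (F τ) - b τ * Real.exp (G τ)) := by
        rw [intervalIntegral.integral_sub hfF hbG]
      rw [e2, ← Real.norm_eq_abs]
      calc ‖∫ τ in s..u, (f τ * Real.exp (F τ) - b τ * Real.exp (G τ))‖
          ≤ ∫ τ in s..u, ‖f τ * Real.exp (F τ) - b τ * Real.exp (G τ)‖ :=
            intervalIntegral.norm_integral_le_integral_norm hsu
        _ ≤ ∫ τ in s..u, (‖f τ - b τ‖ * Real.exp K + ‖b τ‖ * (Real.exp (K + ε) * ε)) := by
            exact intervalIntegral.integral_mono_on hsu (hfF.sub hbG).norm (hi1.add hi2)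
              (fun x _ => hpt x)
        _ = (∫ τ in s..u, ‖f τ - b τ‖ * Real.exp K)
              + ∫ τ in s..u, ‖b τ‖ * (Real.exp (K + ε) * ε) :=
            intervalIntegral.integral_add hi1 hi2
        _ ≤ ε * Real.exp K + (K + ε) * (Real.exp (K + ε) * ε) := by
            rw [intervalIntegral.integral_mul_const, intervalIntegral.integral_mul_const]
            have j1 : (∫ τ in s..u, ‖f τ - b τ‖) ≤ ε := by
              refine le_trans ?_ hb1
              rw [intervalIntegral.integral_of_le hsu]
              exact setIntegral_le_integral (hf.sub hbint).norm
                (ae_of_all _ fun x => norm_nonneg _)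
            have j2 : (∫ τ in s..u, ‖b τ‖) ≤ K + ε := by
              have p1 : (∫ τ in s..u, ‖b τ‖) ≤ ∫ τ in s..u, (‖f τ‖ + ‖f τ - b τ‖) := by
                refine intervalIntegral.integral_mono_on hsu
                  (hbc.norm.intervalIntegrable s u) (hf.intervalIntegrable.norm.add hfb.norm) ?_
                intro x _
                calc ‖b x‖ = ‖f x - (f x - b x)‖ := by ring_nf
                  _ ≤ ‖f x‖ + ‖f x - b x‖ := norm_sub_le _ _
              have p2 : (∫ τ in s..u, (‖f τ‖ + ‖f τ - b τ‖))
                  = (∫ τ in s..u, ‖f τ‖) + ∫ τ in s..u, ‖f τ - b τ‖ :=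
                intervalIntegral.integral_add hf.intervalIntegrable.norm hfb.norm
              have p3 : (∫ τ in s..u, ‖f τ‖) ≤ K := by
                rw [intervalIntegral.integral_of_le hsu]
                exact setIntegral_le_integral hf.norm (ae_of_all _ fun x => norm_nonneg _)
              linarith
            have q1 : (0:ℝ) < Real.exp K := Real.exp_pos _
            have q2 : (0:ℝ) < Real.exp (K + ε) * ε := mul_pos (Real.exp_pos _) hε
            have q3 : (0:ℝ) ≤ ∫ τ in s..u, ‖b τ‖ :=
              intervalIntegral.integral_nonneg hsu fun x _ => norm_nonneg _
            have := mul_le_mul_of_nonneg_right j1 q1.le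
            have := mul_le_mul_of_nonneg_right j2 q2.le
            linarith
    have hbid := key_cont b hbc s u
    have hRdiff : |Real.exp (F u) - Real.exp (G u)| ≤ Real.exp (K + ε) * ε := by
      refine (exp_sub_exp_le (m := K + ε) ?_ ?_).trans
        (mul_le_mul_of_nonneg_left (hFG u) (Real.exp_pos _).le)
      · exact ((le_abs_self _).trans (hFbound u)).trans (by linarith)
      · exact (le_abs_self _).trans (hGbound u)
    have final : d ≤ ε * Real.exp K + (K + ε) * (Real.exp (K + ε) * ε)
        + Real.exp (K + ε) * ε := by
      have e3 : (∫ τ in s..u, f τ * Real.exp (F τ)) - (Real.exp (F u) - 1)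
          = ((∫ τ in s..u, f τ * Real.exp (F τ)) - ∫ τ in s..u, b τ * Real.exp (G τ))
            + -(Real.exp (F u) - Real.exp (G u)) := by
        rw [hbid]; ring
      rw [hd, e3]
      exact (abs_add_le _ _).trans (add_le_add hIdiff (by rw [abs_neg]; exact hRdiff))
    have hexp : Real.exp (K + ε) ≤ Real.exp (K + 1) := Real.exp_le_exp.2 (by linarith)
    have q2 : (0:ℝ) < Real.exp (K + ε) := Real.exp_pos _
    have h1 : (K + ε) * Real.exp (K + ε) ≤ (K + 1) * Real.exp (K + 1) := by nlinarith
    calc d ≤ ε * Real.exp K + (K + ε) * (Real.exp (K + ε) * ε) + Real.exp (K + ε) * ε := final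
      _ ≤ ε * C := by
          rw [hC]
          nlinarith [mul_le_mul_of_nonneg_right h1 hε.le,
            mul_le_mul_of_nonneg_right hexp hε.le]
  have hd0 : d ≤ 0 := by
    by_contra hcon
    push_neg at hcon
    have hε : 0 < min 1 (d / (2 * C)) := lt_min one_pos (by positivity)
    have h4 := main _ hε (min_le_left _ _)
    have h5 : min 1 (d / (2 * C)) * C ≤ (d / (2 * C)) * C :=
      mul_le_mul_of_nonneg_right (min_le_right _ _) hC0.le
    have h6 : (d / (2 * C)) * C = d / 2 := by field_simp
    linarith
  have h7 : d = 0 := le_antisymm hd0 (abs_nonneg _)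
  exact sub_eq_zero.1 (abs_eq_zero.1 h7)

lemma key_id' {a : ℝ → ℝ} {s u : ℝ} (hsu : s ≤ u)
    (ha : IntervalIntegrable a volume s u) :
    ∫ τ in s..u, a τ * Real.exp (∫ x in s..τ, a x)
      = Real.exp (∫ x in s..u, a x) - 1 := by
  set f : ℝ → ℝ := (Ioc s u).indicator a with hfdef
  have hf : Integrable f volume := by
    rw [hfdef, integrable_indicator_iff measurableSet_Ioc]
    exact (intervalIntegrable_iff_integrableOn_Ioc_of_le hsu).1 ha
  have hcongr : ∀ τ, s ≤ τ → τ ≤ u → (∫ x in s..τ, f x) = ∫ x in s..τ, a x := by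
    intro τ h1 h2
    refine intervalIntegral.integral_congr_ae (ae_of_all _ fun x hx => ?_)
    rw [uIoc_of_le h1] at hx
    exact indicator_of_mem (Ioc_subset_Ioc_right h2 hx) a
  have houter : (∫ τ in s..u, f τ * Real.exp (∫ x in s..τ, f x))
      = ∫ τ in s..u, a τ * Real.exp (∫ x in s..τ, a x) := by
    refine intervalIntegral.integral_congr_ae (ae_of_all _ fun τ hτ => ?_)
    rw [uIoc_of_le hsu] at hτ
    rw [hcongr τ hτ.1.le hτ.2, hfdef, indicator_of_mem hτ a]
  rw [← houter, ← hcongr u hsu le_rfl]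
  exact key_id hf s u hsu

/-- Integral form of Grönwall's inequality with integrable coefficient. -/
lemma gronwall_int {a g : ℝ → ℝ} {s t : ℝ} (hst : s ≤ t)
    (ha : IntervalIntegrable a volume s t) (ha0 : ∀ τ, 0 ≤ a τ)
    (hg : ContinuousOn g (Icc s t))
    (hle : ∀ τ ∈ Icc s t, g τ ≤ 1 + ∫ x in s..τ, a x * g x) :
    ∀ τ ∈ Icc s t, g τ ≤ Real.exp (∫ x in s..τ, a x) := by
  set F : ℝ → ℝ := fun τ => ∫ x in s..τ, a x with hF
  have haIcc : IntegrableOn a (Icc s t) volume :=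
    (integrableOn_Icc_iff_integrableOn_Ioc (by simp)).2
      ((intervalIntegrable_iff_integrableOn_Ioc_of_le hst).1 ha)
  have hFcont : ContinuousOn F (Icc s t) := by
    have h := intervalIntegral.continuousOn_primitive_interval
      (μ := volume) (a := s) (b := t) (f := a) (by rwa [uIcc_of_le hst])
    rwa [uIcc_of_le hst] at h
  have hne : (Icc s t).Nonempty := nonempty_Icc.2 hst
  have hφ : ContinuousOn (fun τ => g τ * Real.exp (-F τ)) (Icc s t) :=
    hg.mul (hFcont.neg.rexp)
  obtain ⟨t', ht'mem, ht'max⟩ := isCompact_Icc.exists_isMaxOn hne hφ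
  set M : ℝ := g t' * Real.exp (-F t') with hMdef
  have hMg : ∀ τ ∈ Icc s t, g τ ≤ M * Real.exp (F τ) := by
    intro τ hτ
    have h1 : g τ * Real.exp (-F τ) ≤ M := ht'max hτ
    have h2 : Real.exp (-F τ) * Real.exp (F τ) = 1 := by
      rw [← Real.exp_add]; simp
    have h3 := mul_le_mul_of_nonneg_right h1 (Real.exp_pos (F τ)).le
    rwa [mul_assoc, h2, mul_one] at h3
  have hsub : Icc s t' ⊆ Icc s t := Icc_subset_Icc_right ht'mem.2
  have huIcc : uIcc s t' = Icc s t' := uIcc_of_le ht'mem.1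
  have ha' : IntervalIntegrable a volume s t' :=
    ha.mono_set (by rw [huIcc, uIcc_of_le hst]; exact hsub)
  have hgc' : ContinuousOn g (uIcc s t') := by rw [huIcc]; exact hg.mono hsub
  have hFc' : ContinuousOn F (uIcc s t') := by rw [huIcc]; exact hFcont.mono hsub
  have hag : IntervalIntegrable (fun x => a x * g x) volume s t' :=
    ha'.mul_continuousOn hgc'
  have haeF : IntervalIntegrable (fun x => a x * (M * Real.exp (F x))) volume s t' :=
    ha'.mul_continuousOn ((continuousOn_const.mul hFc'.rexp))
  have step1 : g t' ≤ 1 + ∫ x in s..t', a x * g x := hle t' ht'mem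
  have step2 : (∫ x in s..t', a x * g x) ≤ ∫ x in s..t', a x * (M * Real.exp (F x)) := by
    refine intervalIntegral.integral_mono_on ht'mem.1 hag haeF fun x hx => ?_
    exact mul_le_mul_of_nonneg_left (hMg x (hsub hx)) (ha0 x)
  have step3 : (∫ x in s..t', a x * (M * Real.exp (F x)))
      = M * (Real.exp (F t') - 1) := by
    have e : ∀ x, a x * (M * Real.exp (F x)) = M * (a x * Real.exp (F x)) := fun x => by ring
    simp only [e]
    rw [intervalIntegral.integral_const_mul, key_id' ht'mem.1 ha']
  have hgt' : g t' = M * Real.exp (F t') := by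
    rw [hMdef]
    have h2 : Real.exp (-F t') * Real.exp (F t') = 1 := by
      rw [← Real.exp_add]; simp
    rw [mul_assoc, h2, mul_one]
  have hM1 : M ≤ 1 := by
    rw [hgt'] at step1
    linarith [step2, step3]
  intro τ hτ
  calc g τ ≤ M * Real.exp (F τ) := hMg τ hτ
    _ ≤ 1 * Real.exp (F τ) := mul_le_mul_of_nonneg_right hM1 (Real.exp_pos _).le
    _ = Real.exp (F τ) := one_mul _

/-- Standard estimate: `‖X(t,s)^{±1}‖ ≤ exp(∫_s^t ‖A‖)` for `s ≤ t`,
where `X(t,s)⁻¹ = X(s,t)`. -/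
theorem stmt7 {E : Type*} [NormedAddCommGroup E] [NormedSpace ℝ E] [CompleteSpace E]
    (I : Set ℝ) (hI : I.OrdConnected) (A : ℝ → E →L[ℝ] E)
    (hA : ∀ a ∈ I, ∀ b ∈ I, IntervalIntegrable A volume a b)
    (X : ℝ → ℝ → E →L[ℝ] E) (hX : IsEvolutionOperator I A X) :
    ∀ s ∈ I, ∀ t ∈ I, s ≤ t →
      ‖X t s‖ ≤ Real.exp (∫ τ in s..t, ‖A τ‖) ∧
      ‖X s t‖ ≤ Real.exp (∫ τ in s..t, ‖A τ‖) := by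
  intro s hs t ht hst
  have hIcc : Icc s t ⊆ I := hI.out hs ht
  have hAst : IntervalIntegrable A volume s t := hA s hs t ht
  have hsubIcc : ∀ τ ∈ Icc s t, uIcc s τ ⊆ Icc s t := by
    intro τ hτ
    rw [uIcc_of_le hτ.1]
    exact Icc_subset_Icc_right hτ.2
  constructor
  · -- forward estimate
    obtain ⟨hXc, hXid, hXeq⟩ := hX s hs
    set g : ℝ → ℝ := fun τ => ‖X τ s‖ with hg
    have hgc : ContinuousOn g (Icc s t) := (hXc.mono hIcc).norm
    have hXcont' : ContinuousOn (fun τ => X τ s) (uIcc s t) := by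
      rw [uIcc_of_le hst]; exact hXc.mono hIcc
    have hint : IntervalIntegrable (fun τ => (A τ).comp (X τ s)) volume s t :=
      hAst.mul_continuousOn hXcont'
    have hineq : ∀ τ ∈ Icc s t, g τ ≤ 1 + ∫ x in s..τ, ‖A x‖ * g x := by
      intro τ hτ
      have heq := hXeq s hs τ (hIcc hτ)
      rw [hXid, sub_eq_iff_eq_add] at heq
      have h1 : g τ ≤ 1 + ‖∫ x in s..τ, (A x).comp (X x s)‖ := by
        rw [hg]
        calc ‖X τ s‖ = ‖(∫ x in s..τ, (A x).comp (X x s)) + ContinuousLinearMap.id ℝ E‖ := by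
              rw [← heq]
          _ ≤ ‖∫ x in s..τ, (A x).comp (X x s)‖ + ‖(ContinuousLinearMap.id ℝ E : E →L[ℝ] E)‖ :=
              norm_add_le _ _
          _ ≤ ‖∫ x in s..τ, (A x).comp (X x s)‖ + 1 := by
              have := ContinuousLinearMap.norm_id_le (𝕜 := ℝ) (E := E)
              linarith
          _ = 1 + ‖∫ x in s..τ, (A x).comp (X x s)‖ := by ring
      refine h1.trans (by
        have h2 : ‖∫ x in s..τ, (A x).comp (X x s)‖ ≤ ∫ x in s..τ, ‖(A x).comp (X x s)‖ :=
          intervalIntegral.norm_integral_le_integral_norm hτ.1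
        have h3 : (∫ x in s..τ, ‖(A x).comp (X x s)‖) ≤ ∫ x in s..τ, ‖A x‖ * g x := by
          refine intervalIntegral.integral_mono_on hτ.1
            (hint.mono_set (hsubIcc τ hτ |>.trans (by rw [← uIcc_of_le hst]))).norm
            ((hAst.norm.mono_set (hsubIcc τ hτ |>.trans
              (by rw [← uIcc_of_le hst]))).mul_continuousOn
              ((hgc.mono (hsubIcc τ hτ)))) ?_
          intro x _
          exact ContinuousLinearMap.opNorm_comp_le _ _
        linarith)
    have := gronwall_int hst hAst.norm (fun τ => norm_nonneg _) hgc hineq t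
      (right_mem_Icc.2 hst)
    exact this
  · -- backward estimate
    obtain ⟨hXc, hXid, hXeq⟩ := hX t ht
    set g : ℝ → ℝ := fun τ => ‖X τ t‖ with hg
    have hgc : ContinuousOn g (Icc s t) := (hXc.mono hIcc).norm
    have hXcont' : ContinuousOn (fun τ => X τ t) (uIcc s t) := by
      rw [uIcc_of_le hst]; exact hXc.mono hIcc
    have hint : IntervalIntegrable (fun τ => (A τ).comp (X τ t)) volume s t :=
      hAst.mul_continuousOn hXcont'
    -- backward integral inequality
    have hineq : ∀ τ ∈ Icc s t, g τ ≤ 1 + ∫ x in τ..t, ‖A x‖ * g x := by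
      intro τ hτ
      have hsubτ : uIcc τ t ⊆ Icc s t := by
        rw [uIcc_of_le hτ.2]; exact Icc_subset_Icc_left hτ.1
      have heq := hXeq t ht τ (hIcc hτ)
      rw [hXid, sub_eq_iff_eq_add] at heq
      have h1 : g τ ≤ 1 + ‖∫ x in t..τ, (A x).comp (X x t)‖ := by
        rw [hg]
        calc ‖X τ t‖ = ‖(∫ x in t..τ, (A x).comp (X x t)) + ContinuousLinearMap.id ℝ E‖ := by
              rw [← heq]
          _ ≤ ‖∫ x in t..τ, (A x).comp (X x t)‖ + ‖(ContinuousLinearMap.id ℝ E : E →L[ℝ] E)‖ :=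
              norm_add_le _ _
          _ ≤ ‖∫ x in t..τ, (A x).comp (X x t)‖ + 1 := by
              have := ContinuousLinearMap.norm_id_le (𝕜 := ℝ) (E := E)
              linarith
          _ = 1 + ‖∫ x in t..τ, (A x).comp (X x t)‖ := by ring
      refine h1.trans (by
        have hsymm : ‖∫ x in t..τ, (A x).comp (X x t)‖ = ‖∫ x in τ..t, (A x).comp (X x t)‖ := by
          rw [intervalIntegral.integral_symm, norm_neg]
        have h2 : ‖∫ x in τ..t, (A x).comp (X x t)‖ ≤ ∫ x in τ..t, ‖(A x).comp (X x t)‖ :=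
          intervalIntegral.norm_integral_le_integral_norm hτ.2
        have h3 : (∫ x in τ..t, ‖(A x).comp (X x t)‖) ≤ ∫ x in τ..t, ‖A x‖ * g x := by
          refine intervalIntegral.integral_mono_on hτ.2
            (hint.mono_set (hsubτ.trans (by rw [← uIcc_of_le hst]))).norm
            ((hAst.norm.mono_set (hsubτ.trans (by rw [← uIcc_of_le hst]))).mul_continuousOn
              (hgc.mono hsubτ)) ?_
          intro x _
          exact ContinuousLinearMap.opNorm_comp_le _ _
        rw [hsymm]; linarith)
    -- reflect time
    set G : ℝ → ℝ := fun σ => g (s + t - σ) with hGdef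
    set B : ℝ → ℝ := fun σ => ‖A (s + t - σ)‖ with hBdef
    have hBint : IntervalIntegrable B volume s t := by
      have := (hAst.norm.comp_sub_left (s + t)).symm
      simpa using this
    have hmaps : MapsTo (fun σ => s + t - σ) (Icc s t) (Icc s t) := by
      intro σ hσ
      simp only [mem_Icc] at hσ ⊢
      constructor <;> linarith [hσ.1, hσ.2]
    have hGc : ContinuousOn G (Icc s t) :=
      hgc.comp ((continuous_const.sub continuous_id).continuousOn) hmaps
    have hGle : ∀ σ ∈ Icc s t, G σ ≤ 1 + ∫ x in s..σ, B x * G x := by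
      intro σ hσ
      have hτ : s + t - σ ∈ Icc s t := hmaps hσ
      have e : (∫ x in s..σ, B x * G x) = ∫ x in (s + t - σ)..t, ‖A x‖ * g x := by
        have := intervalIntegral.integral_comp_sub_left
          (a := s) (b := σ) (fun x => ‖A x‖ * g x) (s + t)
        simpa using this
      rw [e]
      exact hineq _ hτ
    have hfin := gronwall_int hst hBint (fun τ => norm_nonneg _) hGc hGle t
      (right_mem_Icc.2 hst)
    have eB : (∫ x in s..t, B x) = ∫ x in s..t, ‖A x‖ := by
      have := intervalIntegral.integral_comp_sub_left
        (a := s) (b := t) (fun x => ‖A x‖) (s + t)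
      simpa using this
    have eG : G t = ‖X s t‖ := by rw [hGdef]; simp [hg]
    rw [eG, eB] at hfin
    exact hfin
end

section
/- Let a ≤ b be real numbers, F a Banach space, g : [a, b] → F Bochner integrable, and G(t) = ∫_a^t g dλ. Then the total variation of G with respect to F equals ∫_{[a,b]} ‖g‖ dλ. -/
open MeasureTheory Set

section AuxStmt14
open intervalIntegral
variable {F : Type*} [NormedAddCommGroup F] [NormedSpace ℝ F] [CompleteSpace F]

lemma aux_phi (φ : ℝ → F) (hφ : Continuous φ) {s t ε₁ : ℝ} (hst : s ≤ t)
    (hnear : ∀ x ∈ Set.Icc s t, ‖φ x - φ s‖ ≤ ε₁) :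
    ∫ x in s..t, ‖φ x‖ ≤ ‖∫ x in s..t, φ x‖ + 2 * ε₁ * (t - s) := by
  have hint : IntervalIntegrable φ volume s t := hφ.intervalIntegrable s t
  have h1 : ∫ x in s..t, ‖φ x‖ ≤ ∫ _x in s..t, (‖φ s‖ + ε₁) := by
    apply intervalIntegral.integral_mono_on hst (hφ.norm.intervalIntegrable s t)
      intervalIntegrable_const
    intro x hx
    have h2 := norm_sub_norm_le (φ x) (φ s)
    have := hnear x hx
    linarith
  have h2 : ∫ x in s..t, (φ s - φ x) = (t - s) • φ s - ∫ x in s..t, φ x := by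
    rw [intervalIntegral.integral_sub intervalIntegrable_const hint,
      intervalIntegral.integral_const]
  have h3 : ‖∫ x in s..t, (φ s - φ x)‖ ≤ ε₁ * (t - s) := by
    calc ‖∫ x in s..t, (φ s - φ x)‖ ≤ ∫ x in s..t, ‖φ s - φ x‖ :=
          intervalIntegral.norm_integral_le_integral_norm hst
      _ ≤ ∫ _x in s..t, ε₁ := by
          apply intervalIntegral.integral_mono_on hst
            ((continuous_const.sub hφ).norm.intervalIntegrable s t) intervalIntegrable_const
          intro x hx
          rw [Pi.sub_apply, norm_sub_rev]
          exact hnear x hx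
      _ = ε₁ * (t - s) := by rw [intervalIntegral.integral_const, smul_eq_mul, mul_comm]
  have h4 : (t - s) * ‖φ s‖ ≤ ‖∫ x in s..t, φ x‖ + ε₁ * (t - s) := by
    have : ‖(t - s) • φ s‖ ≤ ‖∫ x in s..t, φ x‖ + ‖∫ x in s..t, (φ s - φ x)‖ := by
      rw [show (t - s) • φ s = (∫ x in s..t, φ x) + ∫ x in s..t, (φ s - φ x) by rw [h2]; abel]
      exact norm_add_le _ _
    rw [norm_smul, Real.norm_eq_abs, abs_of_nonneg (sub_nonneg.2 hst)] at this
    linarith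
  have h5 : ∫ _x in s..t, (‖φ s‖ + ε₁) = (t - s) * ‖φ s‖ + ε₁ * (t - s) := by
    rw [intervalIntegral.integral_const, smul_eq_mul]; ring
  linarith

-- lower bound as standalone lemma
lemma aux_lower (a b : ℝ) (hlt : a < b) (g : ℝ → F) (hg : IntegrableOn g (Set.Icc a b))
    (G : ℝ → F)
    (hGd : ∀ s t : ℝ, s ∈ Set.Icc a b → t ∈ Set.Icc a b → G t - G s = ∫ u in s..t, g u)
    (hii : ∀ s t : ℝ, s ∈ Set.Icc a b → t ∈ Set.Icc a b → IntervalIntegrable g volume s t) :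
    ENNReal.ofReal (∫ t in Set.Icc a b, ‖g t‖) ≤ eVariationOn G (Set.Icc a b) := by
  apply ENNReal.le_of_forall_pos_le_add
  intro ε hε _
  set εr : ℝ := (ε : ℝ) with hεr_def
  have hεr : 0 < εr := hε
  have hba : 0 < b - a := sub_pos.2 hlt
  -- continuous approximation
  have hmeas : MeasurableSet (Set.Icc a b) := measurableSet_Icc
  have hgind : Integrable ((Set.Icc a b).indicator g) volume := hg.integrable_indicator hmeas
  obtain ⟨φ, _φsupp, φint_le, φcont, φint⟩ :=
    hgind.exists_hasCompactSupport_integral_sub_le (show (0:ℝ) < εr / 4 by positivity)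
  have happrox : ∫ t in Set.Icc a b, ‖g t - φ t‖ ≤ εr / 4 := by
    have e1 : ∫ t in Set.Icc a b, ‖g t - φ t‖
        = ∫ t in Set.Icc a b, ‖(Set.Icc a b).indicator g t - φ t‖ :=
      setIntegral_congr_fun hmeas fun x hx => by rw [Set.indicator_of_mem hx]
    rw [e1]
    refine le_trans (setIntegral_le_integral ((hgind.sub φint).norm)
      (Filter.Eventually.of_forall fun x => norm_nonneg _)) φint_le
  -- uniform continuity on Icc a b
  set ε₁ : ℝ := εr / (4 * (b - a)) with hε₁_def
  have hε₁ : 0 < ε₁ := by positivity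
  obtain ⟨δ, hδ, hmod⟩ := Metric.uniformContinuousOn_iff.1
    (isCompact_Icc.uniformContinuousOn_of_continuous φcont.continuousOn
      (s := Set.Icc a b)) ε₁ hε₁
  -- partition
  obtain ⟨n, hn⟩ := exists_nat_gt ((b - a) / δ)
  have hnR : (0 : ℝ) < n := lt_trans (div_pos hba hδ) hn
  have hn0 : (n : ℝ) ≠ 0 := ne_of_gt hnR
  set Δ : ℝ := (b - a) / n with hΔ_def
  have hΔpos : 0 < Δ := div_pos hba hnR
  have hΔδ : Δ < δ := by
    have h' : b - a < n * δ := (div_lt_iff₀ hδ).1 hn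
    rw [hΔ_def, div_lt_iff₀ hnR]
    linarith [mul_comm δ (n : ℝ), h']
  have hnΔ : (n : ℝ) * Δ = b - a := by rw [hΔ_def]; field_simp
  set u : ℕ → ℝ := fun i => a + (min i n : ℕ) * Δ with hu_def
  have ueq : ∀ i, u i = a + ((min i n : ℕ) : ℝ) * Δ := fun i => rfl
  have umono : Monotone u := by
    intro i j hij
    rw [ueq i, ueq j]
    have : ((min i n : ℕ) : ℝ) ≤ ((min j n : ℕ) : ℝ) := by
      exact_mod_cast min_le_min hij (le_refl n)
    exact add_le_add_right (mul_le_mul_of_nonneg_right this hΔpos.le) a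
  have umem : ∀ i, u i ∈ Set.Icc a b := by
    intro i
    have h0 : (0:ℝ) ≤ ((min i n : ℕ) : ℝ) * Δ := mul_nonneg (Nat.cast_nonneg _) hΔpos.le
    have h1 : ((min i n : ℕ) : ℝ) ≤ (n : ℝ) := by exact_mod_cast min_le_right i n
    have h2 : ((min i n : ℕ) : ℝ) * Δ ≤ b - a := by
      rw [← hnΔ]; exact mul_le_mul_of_nonneg_right h1 hΔpos.le
    rw [Set.mem_Icc, ueq i]
    constructor <;> linarith
  have u0 : u 0 = a := by rw [ueq 0]; simp
  have un : u n = b := by rw [ueq n, min_self, hnΔ]; ring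
  have ustep : ∀ i < n, u (i + 1) = u i + Δ := by
    intro i hi
    rw [ueq i, ueq (i + 1), min_eq_left hi.le, min_eq_left (Nat.succ_le_of_lt hi)]
    push_cast; ring
  have usub : ∀ i < n, Set.Icc (u i) (u (i + 1)) ⊆ Set.Icc a b := fun i hi =>
    Set.Icc_subset_Icc (umem i).1 (umem (i + 1)).2
  -- per-interval estimate
  have key : ∀ i < n, ∫ x in u i..u (i + 1), ‖g x‖ ≤
      ‖G (u (i + 1)) - G (u i)‖ + 2 * ε₁ * Δ + 2 * ∫ x in u i..u (i + 1), ‖g x - φ x‖ := by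
    intro i hi
    set s := u i
    set t := u (i + 1)
    have hst : s ≤ t := umono (Nat.le_succ i)
    have hts : t - s = Δ := by rw [show t = s + Δ from ustep i hi]; ring
    have hgi : IntervalIntegrable g volume s t := hii s t (umem i) (umem (i + 1))
    have hφi : IntervalIntegrable φ volume s t := φcont.intervalIntegrable s t
    have hgφi : IntervalIntegrable (fun x => ‖g x - φ x‖) volume s t := (hgi.sub hφi).norm
    have h1 : ∫ x in s..t, ‖g x‖ ≤ (∫ x in s..t, ‖φ x‖) + ∫ x in s..t, ‖g x - φ x‖ := by
      rw [← intervalIntegral.integral_add (φcont.norm.intervalIntegrable s t) hgφi]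
      apply intervalIntegral.integral_mono_on hst hgi.norm
        ((φcont.norm.intervalIntegrable s t).add hgφi)
      intro x _
      have := norm_sub_norm_le (g x) (φ x)
      show ‖g x‖ ≤ ‖φ x‖ + ‖g x - φ x‖
      linarith
    have h2 : ∫ x in s..t, ‖φ x‖ ≤ ‖∫ x in s..t, φ x‖ + 2 * ε₁ * Δ := by
      rw [← hts]
      apply aux_phi φ φcont hst
      intro x hx
      have hx' : x ∈ Set.Icc a b := usub i hi hx
      have hs' : s ∈ Set.Icc a b := umem i
      have hd : dist x s < δ := by
        rw [Real.dist_eq, abs_of_nonneg (sub_nonneg.2 hx.1)]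
        have : x ≤ t := hx.2
        linarith [hΔδ, hts]
      have := hmod x hx' s hs' hd
      rw [dist_eq_norm] at this
      exact this.le
    have h3 : ‖∫ x in s..t, φ x‖ ≤ ‖G t - G s‖ + ∫ x in s..t, ‖g x - φ x‖ := by
      have e : ∫ x in s..t, φ x = (∫ x in s..t, g x) - ∫ x in s..t, (g x - φ x) := by
        rw [intervalIntegral.integral_sub hgi hφi]; abel
      rw [e, hGd s t (umem i) (umem (i + 1))]
      calc ‖(∫ x in s..t, g x) - ∫ x in s..t, (g x - φ x)‖
          ≤ ‖∫ x in s..t, g x‖ + ‖∫ x in s..t, (g x - φ x)‖ := norm_sub_le _ _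
        _ ≤ ‖∫ x in s..t, g x‖ + ∫ x in s..t, ‖g x - φ x‖ := by
            have := intervalIntegral.norm_integral_le_integral_norm
              (f := fun x => g x - φ x) (μ := volume) hst
            linarith
    linarith
  -- summing
  have hiin : ∀ k < n, IntervalIntegrable (fun x => ‖g x‖) volume (u k) (u (k + 1)) :=
    fun k _ => (hii (u k) (u (k + 1)) (umem k) (umem (k + 1))).norm
  have hgφn : ∀ k < n, IntervalIntegrable (fun x => ‖g x - φ x‖) volume (u k) (u (k + 1)) :=
    fun k _ => ((hii (u k) (u (k + 1)) (umem k) (umem (k + 1))).sub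
      (φcont.intervalIntegrable _ _)).norm
  have sum1 : ∑ i ∈ Finset.range n, ∫ x in u i..u (i + 1), ‖g x‖
      = ∫ t in Set.Icc a b, ‖g t‖ := by
    rw [intervalIntegral.sum_integral_adjacent_intervals hiin, u0, un,
      intervalIntegral.integral_of_le hlt.le, ← integral_Icc_eq_integral_Ioc]
  have sum2 : ∑ i ∈ Finset.range n, ∫ x in u i..u (i + 1), ‖g x - φ x‖ ≤ εr / 4 := by
    rw [intervalIntegral.sum_integral_adjacent_intervals hgφn, u0, un,
      intervalIntegral.integral_of_le hlt.le, ← integral_Icc_eq_integral_Ioc]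
    exact happrox
  have sum3 : (n : ℝ) * (2 * ε₁ * Δ) = εr / 2 := by
    have e : (n : ℝ) * (2 * ε₁ * Δ) = 2 * ε₁ * ((n : ℝ) * Δ) := by ring
    have hba' : b - a ≠ 0 := hba.ne'
    rw [e, hnΔ, hε₁_def]
    field_simp
    ring
  set S : ℝ := ∑ i ∈ Finset.range n, ‖G (u (i + 1)) - G (u i)‖ with hS_def
  have hSnn : 0 ≤ S := Finset.sum_nonneg fun i _ => norm_nonneg _
  have main : ∫ t in Set.Icc a b, ‖g t‖ ≤ S + εr := by
    have := Finset.sum_le_sum (fun i hi => key i (Finset.mem_range.1 hi))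
    rw [sum1] at this
    have expand : ∑ i ∈ Finset.range n, (‖G (u (i + 1)) - G (u i)‖ + 2 * ε₁ * Δ
        + 2 * ∫ x in u i..u (i + 1), ‖g x - φ x‖)
        = S + (n : ℝ) * (2 * ε₁ * Δ)
          + 2 * ∑ i ∈ Finset.range n, ∫ x in u i..u (i + 1), ‖g x - φ x‖ := by
      rw [Finset.sum_add_distrib, Finset.sum_add_distrib, Finset.sum_const,
        Finset.card_range, Finset.mul_sum]
      push_cast
      ring
    rw [expand, sum3] at this
    linarith
  -- conclude in ENNReal
  have hvar : ENNReal.ofReal S ≤ eVariationOn G (Set.Icc a b) := by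
    rw [ENNReal.ofReal_sum_of_nonneg fun i _ => norm_nonneg _]
    have : ∀ i ∈ Finset.range n, ENNReal.ofReal ‖G (u (i + 1)) - G (u i)‖
        = edist (G (u (i + 1))) (G (u i)) := by
      intro i _
      rw [edist_dist, dist_eq_norm]
    rw [Finset.sum_congr rfl this]
    exact eVariationOn.sum_le (f := G) (n := n) umono umem
  calc ENNReal.ofReal (∫ t in Set.Icc a b, ‖g t‖) ≤ ENNReal.ofReal (S + εr) :=
        ENNReal.ofReal_le_ofReal main
    _ = ENNReal.ofReal S + ENNReal.ofReal εr := ENNReal.ofReal_add hSnn hεr.le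
    _ ≤ eVariationOn G (Set.Icc a b) + ε := by
        rw [hεr_def, ENNReal.ofReal_coe_nnreal]
        exact add_le_add_left hvar _

end AuxStmt14

/-- The total variation of an indefinite Bochner integral
`G(t) = ∫_a^t g dλ` equals `∫_{[a,b]} ‖g‖ dλ`. -/
theorem stmt14 {F : Type*} [NormedAddCommGroup F] [NormedSpace ℝ F] [CompleteSpace F]
    (a b : ℝ) (hab : a ≤ b) (g : ℝ → F) (hg : IntegrableOn g (Set.Icc a b))
    (G : ℝ → F) (hG : ∀ t ∈ Set.Icc a b, G t = ∫ u in a..t, g u) :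
    eVariationOn G (Set.Icc a b) = ENNReal.ofReal (∫ t in Set.Icc a b, ‖g t‖) := by
  -- interval integrability on subintervals
  have hii : ∀ s t : ℝ, s ∈ Set.Icc a b → t ∈ Set.Icc a b → IntervalIntegrable g volume s t := by
    intro s t hs ht
    apply IntegrableOn.intervalIntegrable
    exact hg.mono_set (Set.uIcc_subset_Icc hs ht)
  have hiin : ∀ s t : ℝ, s ∈ Set.Icc a b → t ∈ Set.Icc a b →
      IntervalIntegrable (fun x => ‖g x‖) volume s t := fun s t hs ht => (hii s t hs ht).norm
  -- G difference
  have hGd : ∀ s t : ℝ, s ∈ Set.Icc a b → t ∈ Set.Icc a b →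
      G t - G s = ∫ u in s..t, g u := by
    intro s t hs ht
    rw [hG t ht, hG s hs]
    exact intervalIntegral.integral_interval_sub_left (hii a t (Set.left_mem_Icc.2 hab) ht)
      (hii a s (Set.left_mem_Icc.2 hab) hs)
  have hgnorm : IntegrableOn (fun t => ‖g t‖) (Set.Icc a b) := hg.norm
  have hnn : 0 ≤ ∫ t in Set.Icc a b, ‖g t‖ :=
    setIntegral_nonneg measurableSet_Icc fun x _ => norm_nonneg _
  apply le_antisymm
  · -- upper bound
    apply iSup_le
    rintro ⟨n, u, hu, us⟩
    simp only
    have key : ∀ i, dist (G (u (i + 1))) (G (u i)) ≤ ∫ x in u i..u (i + 1), ‖g x‖ := by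
      intro i
      rw [dist_eq_norm, hGd (u i) (u (i + 1)) (us i) (us (i + 1))]
      exact intervalIntegral.norm_integral_le_integral_norm (hu (Nat.le_succ i))
    calc ∑ i ∈ Finset.range n, edist (G (u (i + 1))) (G (u i))
        = ∑ i ∈ Finset.range n, ENNReal.ofReal (dist (G (u (i + 1))) (G (u i))) := by
          simp [edist_dist]
      _ ≤ ∑ i ∈ Finset.range n, ENNReal.ofReal (∫ x in u i..u (i + 1), ‖g x‖) :=
          Finset.sum_le_sum fun i _ => ENNReal.ofReal_le_ofReal (key i)
      _ = ENNReal.ofReal (∑ i ∈ Finset.range n, ∫ x in u i..u (i + 1), ‖g x‖) := by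
          rw [ENNReal.ofReal_sum_of_nonneg]
          intro i _
          exact intervalIntegral.integral_nonneg (hu (Nat.le_succ i)) fun x _ => norm_nonneg _
      _ ≤ ENNReal.ofReal (∫ t in Set.Icc a b, ‖g t‖) := by
          apply ENNReal.ofReal_le_ofReal
          rw [intervalIntegral.sum_integral_adjacent_intervals
            (fun k _ => hiin (u k) (u (k + 1)) (us k) (us (k + 1)))]
          rw [intervalIntegral.integral_of_le (hu (Nat.zero_le n))]
          apply setIntegral_mono_set hgnorm
            (Filter.Eventually.of_forall fun x => norm_nonneg _)
          exact Filter.Eventually.of_forall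
            (Set.Ioc_subset_Icc_self.trans (Set.Icc_subset_Icc (us 0).1 (us n).2))
  · rcases eq_or_lt_of_le hab with heq | hlt
    · subst heq
      have : (volume.restrict (Set.Icc a a)) = 0 := by
        rw [Measure.restrict_eq_zero, Set.Icc_self]
        simp
      rw [this, integral_zero_measure]
      simp
    · exact aux_lower a b hlt g hg G hGd hii
end
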